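/- arXiv:1312.1645 — 10 statements merged into one kernel-verified Lean document; each statement's English description precedes it below -/
import Mathlib

section
/- For 0 < τ < 1 and an integrable real-valued random variable L, there exists a unique real number ℓ satisfying τ·E[max(L − ℓ, 0)] = (1 − τ)·E[max(ℓ − L, 0)]. -/
open MeasureTheory

theorem expectile_exists_unique {Ω : Type*} [MeasurableSpace Ω] (P : Measure Ω)
    [IsProbabilityMeasure P] (L : Ω → ℝ) (hL : Integrable L P)
    (τ : ℝ) (hτ0 : 0 < τ) (hτ1 : τ < 1) :
    ∃! ℓ : ℝ, τ * ∫ ω, max (L ω - ℓ) 0 ∂P = (1 - τ) * ∫ ω, max (ℓ - L ω) 0 ∂P := by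
  set g : ℝ → ℝ := fun ℓ => ∫ ω, max (L ω - ℓ) 0 ∂P with hgdef
  set k : ℝ → ℝ := fun ℓ => ∫ ω, max (ℓ - L ω) 0 ∂P with hkdef
  have intg : ∀ ℓ : ℝ, Integrable (fun ω => max (L ω - ℓ) 0) P := by
    intro ℓ
    simpa using (hL.sub (integrable_const ℓ)).pos_part
  have intk : ∀ ℓ : ℝ, Integrable (fun ω => max (ℓ - L ω) 0) P := by
    intro ℓ
    simpa using ((integrable_const ℓ).sub hL).pos_part
  set EL : ℝ := ∫ ω, L ω ∂P with hEL
  set M : ℝ := ∫ ω, |L ω| ∂P with hM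
  have hELM : |EL| ≤ M := by
    simpa [hEL, hM, Real.norm_eq_abs] using
      norm_integral_le_integral_norm (f := L) (μ := P)
  have hM0 : 0 ≤ M := integral_nonneg fun ω => abs_nonneg _
  -- key identity: g ℓ - k ℓ = EL - ℓ
  have key : ∀ ℓ : ℝ, g ℓ - k ℓ = EL - ℓ := by
    intro ℓ
    have h1 : (fun ω => max (L ω - ℓ) 0 - max (ℓ - L ω) 0) = fun ω => L ω - ℓ := by
      funext ω
      rcases le_total (L ω) ℓ with h | h
      · rw [max_eq_right (by linarith), max_eq_left (by linarith)]; ring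
      · rw [max_eq_left (by linarith), max_eq_right (by linarith)]; ring
    have h2 : g ℓ - k ℓ = ∫ ω, (max (L ω - ℓ) 0 - max (ℓ - L ω) 0) ∂P := by
      rw [integral_sub (intg ℓ) (intk ℓ)]
    rw [h2, h1, integral_sub hL (integrable_const ℓ), integral_const]
    simp [hEL]
  -- monotonicity
  have gmono : ∀ ℓ₁ ℓ₂ : ℝ, ℓ₁ ≤ ℓ₂ → g ℓ₂ ≤ g ℓ₁ := by
    intro ℓ₁ ℓ₂ h
    exact integral_mono (intg ℓ₂) (intg ℓ₁) fun ω =>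
      max_le_max (by linarith) le_rfl
  have kmono : ∀ ℓ₁ ℓ₂ : ℝ, ℓ₁ ≤ ℓ₂ → k ℓ₁ ≤ k ℓ₂ := by
    intro ℓ₁ ℓ₂ h
    exact integral_mono (intk ℓ₁) (intk ℓ₂) fun ω =>
      max_le_max (by linarith) le_rfl
  -- bounds
  have g_nonneg : ∀ ℓ : ℝ, 0 ≤ g ℓ := fun ℓ =>
    integral_nonneg fun ω => le_max_right _ _
  have k_nonneg : ∀ ℓ : ℝ, 0 ≤ k ℓ := fun ℓ =>
    integral_nonneg fun ω => le_max_right _ _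
  have g_ge : ∀ ℓ : ℝ, EL - ℓ ≤ g ℓ := by
    intro ℓ
    have := key ℓ
    have := k_nonneg ℓ
    linarith
  have k_ge : ∀ ℓ : ℝ, ℓ - EL ≤ k ℓ := by
    intro ℓ
    have := key ℓ
    have := g_nonneg ℓ
    linarith
  have k_le : ∀ ℓ : ℝ, ℓ ≤ 0 → k ℓ ≤ M := by
    intro ℓ hℓ
    refine integral_mono (intk ℓ) hL.abs fun ω => ?_
    exact max_le (by have := neg_abs_le (L ω); linarith) (abs_nonneg _)
  have g_le : ∀ ℓ : ℝ, 0 ≤ ℓ → g ℓ ≤ M := by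
    intro ℓ hℓ
    refine integral_mono (intg ℓ) hL.abs fun ω => ?_
    exact max_le (by have := le_abs_self (L ω); linarith) (abs_nonneg _)
  -- Lipschitz / continuity
  have glip : ∀ ℓ₁ ℓ₂ : ℝ, ℓ₁ ≤ ℓ₂ → g ℓ₁ - g ℓ₂ ≤ ℓ₂ - ℓ₁ := by
    intro ℓ₁ ℓ₂ h
    have h1 := key ℓ₁
    have h2 := key ℓ₂
    have := kmono ℓ₁ ℓ₂ h
    linarith
  have klip : ∀ ℓ₁ ℓ₂ : ℝ, ℓ₁ ≤ ℓ₂ → k ℓ₂ - k ℓ₁ ≤ ℓ₂ - ℓ₁ := by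
    intro ℓ₁ ℓ₂ h
    have h1 := key ℓ₁
    have h2 := key ℓ₂
    have := gmono ℓ₁ ℓ₂ h
    linarith
  have gabs : ∀ x y : ℝ, |g x - g y| ≤ |x - y| := by
    intro x y
    rcases le_total x y with h | h
    · rw [abs_sub_comm x y, abs_of_nonneg (by linarith : (0:ℝ) ≤ y - x), abs_le]
      exact ⟨by linarith [gmono x y h], by linarith [glip x y h]⟩
    · rw [abs_of_nonneg (by linarith : (0:ℝ) ≤ x - y), abs_le]
      exact ⟨by linarith [glip y x h], by linarith [gmono y x h]⟩
  have kabs : ∀ x y : ℝ, |k x - k y| ≤ |x - y| := by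
    intro x y
    rcases le_total x y with h | h
    · rw [abs_sub_comm x y, abs_of_nonneg (by linarith : (0:ℝ) ≤ y - x), abs_le]
      exact ⟨by linarith [klip x y h], by linarith [kmono x y h]⟩
    · rw [abs_of_nonneg (by linarith : (0:ℝ) ≤ x - y), abs_le]
      exact ⟨by linarith [kmono y x h], by linarith [klip y x h]⟩
  have gcont : Continuous g := by
    have : LipschitzWith 1 g := by
      refine LipschitzWith.of_dist_le_mul fun x y => ?_
      simp only [Real.dist_eq, NNReal.coe_one, one_mul]
      exact gabs x y
    exact this.continuous
  have kcont : Continuous k := by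
    have : LipschitzWith 1 k := by
      refine LipschitzWith.of_dist_le_mul fun x y => ?_
      simp only [Real.dist_eq, NNReal.coe_one, one_mul]
      exact kabs x y
    exact this.continuous
  set f : ℝ → ℝ := fun ℓ => τ * g ℓ - (1 - τ) * k ℓ with hfdef
  have fcont : Continuous f := by
    exact ((continuous_const.mul gcont).sub (continuous_const.mul kcont))
  -- endpoints
  set a : ℝ := -(2 * M + 1) / τ with ha
  set b : ℝ := (2 * M + 1) / (1 - τ) with hb
  have ha0 : a ≤ 0 := by
    rw [ha]
    apply div_nonpos_of_nonpos_of_nonneg <;> linarith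
  have hb0 : 0 ≤ b := by
    rw [hb]
    apply div_nonneg <;> linarith
  have hab : a ≤ b := le_trans ha0 hb0
  have hfa : 0 ≤ f a := by
    show 0 ≤ τ * g a - (1 - τ) * k a
    have h1 := g_ge a
    have h2 := k_le a ha0
    have h3 : τ * a = -(2 * M + 1) := by
      rw [ha, mul_comm, div_mul_cancel₀ _ (ne_of_gt hτ0)]
    have habs := abs_le.mp hELM
    have e1 : τ * g a ≥ τ * (EL - a) :=
      mul_le_mul_of_nonneg_left h1 hτ0.le
    have e2 : τ * (EL - a) = τ * EL - τ * a := by ring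
    have e3 : τ * EL ≥ τ * (-M) := mul_le_mul_of_nonneg_left habs.1 hτ0.le
    have e4 : τ * (-M) ≥ -M := by nlinarith
    have e5 : (1 - τ) * k a ≤ (1 - τ) * M :=
      mul_le_mul_of_nonneg_left h2 (by linarith)
    have e6 : (1 - τ) * M ≤ M := by nlinarith
    linarith
  have hfb : f b ≤ 0 := by
    show τ * g b - (1 - τ) * k b ≤ 0
    have h1 := k_ge b
    have h2 := g_le b hb0
    have h3 : (1 - τ) * b = 2 * M + 1 := by
      rw [hb, mul_comm, div_mul_cancel₀ _ (ne_of_gt (by linarith : (0:ℝ) < 1 - τ))]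
    have habs := abs_le.mp hELM
    have e1 : (1 - τ) * k b ≥ (1 - τ) * (b - EL) :=
      mul_le_mul_of_nonneg_left h1 (by linarith)
    have e2 : (1 - τ) * (b - EL) = (1 - τ) * b - (1 - τ) * EL := by ring
    have e3 : (1 - τ) * EL ≤ (1 - τ) * M := mul_le_mul_of_nonneg_left habs.2 (by linarith)
    have e4 : (1 - τ) * M ≤ M := by nlinarith
    have e5 : τ * g b ≤ τ * M := mul_le_mul_of_nonneg_left h2 hτ0.le
    have e6 : τ * M ≤ M := by nlinarith
    linarith
  obtain ⟨ℓ₀, hℓ₀mem, hℓ₀⟩ : ∃ x ∈ Set.Icc a b, f x = 0 := by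
    have := intermediate_value_Icc' hab fcont.continuousOn
    have h0 : (0 : ℝ) ∈ Set.Icc (f b) (f a) := ⟨hfb, hfa⟩
    obtain ⟨x, hx, hfx⟩ := this h0
    exact ⟨x, hx, hfx⟩
  -- uniqueness helper
  have uniq : ∀ ℓ₁ ℓ₂ : ℝ, f ℓ₁ = 0 → f ℓ₂ = 0 → ℓ₁ = ℓ₂ := by
    intro ℓ₁ ℓ₂ h1 h2
    by_contra hne
    wlog hlt : ℓ₁ < ℓ₂ generalizing ℓ₁ ℓ₂
    · exact this ℓ₂ ℓ₁ h2 h1 (Ne.symm hne) (lt_of_le_of_ne (not_lt.mp hlt) (Ne.symm hne))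
    have hA : 0 ≤ g ℓ₁ - g ℓ₂ := by linarith [gmono ℓ₁ ℓ₂ hlt.le]
    have hB : 0 ≤ k ℓ₂ - k ℓ₁ := by linarith [kmono ℓ₁ ℓ₂ hlt.le]
    have hsum : (g ℓ₁ - g ℓ₂) + (k ℓ₂ - k ℓ₁) = ℓ₂ - ℓ₁ := by
      have := key ℓ₁; have := key ℓ₂; linarith
    have hzero : τ * (g ℓ₁ - g ℓ₂) + (1 - τ) * (k ℓ₂ - k ℓ₁) = 0 := by
      simp only [hfdef] at h1 h2
      linarith
    have p1 : 0 ≤ τ * (g ℓ₁ - g ℓ₂) := mul_nonneg hτ0.le hA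
    have p2 : 0 ≤ (1 - τ) * (k ℓ₂ - k ℓ₁) := mul_nonneg (by linarith) hB
    have q1 : τ * (g ℓ₁ - g ℓ₂) = 0 := by linarith
    have q2 : (1 - τ) * (k ℓ₂ - k ℓ₁) = 0 := by linarith
    have r1 : g ℓ₁ - g ℓ₂ = 0 := by
      rcases mul_eq_zero.mp q1 with h | h
      · exact absurd h (ne_of_gt hτ0)
      · exact h
    have r2 : k ℓ₂ - k ℓ₁ = 0 := by
      rcases mul_eq_zero.mp q2 with h | h
      · exact absurd h (ne_of_gt (by linarith : (0:ℝ) < 1 - τ))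
      · exact h
    linarith
  refine ⟨ℓ₀, ?_, ?_⟩
  · show τ * g ℓ₀ = (1 - τ) * k ℓ₀
    simp only [hfdef] at hℓ₀
    linarith
  · intro y hy
    have : f y = 0 := by
      simp only [hfdef]
      have : τ * g y = (1 - τ) * k y := hy
      linarith
    exact uniq y ℓ₀ this hℓ₀
end

section
/- For 0 < τ < 1 and a square-integrable random variable L, the τ-expectile e_τ(L) is the unique minimizer over ℓ ∈ ℝ of the function ℓ ↦ E[τ·max(L − ℓ, 0)² + (1 − τ)·max(ℓ − L, 0)²]. -/
open MeasureTheory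

lemma key_pt (τ ℓ e a : ℝ) (hτ0 : 0 < τ) (hτ1 : τ < 1) :
    τ * max (a - e) 0 ^ 2 + (1 - τ) * max (e - a) 0 ^ 2
      + (2 * τ * max (a - e) 0 - 2 * (1 - τ) * max (e - a) 0) * (e - ℓ)
      + min τ (1 - τ) * (e - ℓ) ^ 2
    ≤ τ * max (a - ℓ) 0 ^ 2 + (1 - τ) * max (ℓ - a) 0 ^ 2 := by
  rcases le_total a e with h1 | h1 <;> rcases le_total a ℓ with h2 | h2 <;>
    rcases min_cases τ (1 - τ) with ⟨hm, hc⟩ | ⟨hm, hc⟩ <;>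
    rw [hm] <;>
    simp only [max_eq_right (sub_nonpos.mpr h1), max_eq_left (sub_nonneg.mpr h1),
      max_eq_right (sub_nonpos.mpr h2), max_eq_left (sub_nonneg.mpr h2)] <;>
    nlinarith [sq_nonneg (e - ℓ), sq_nonneg (a - ℓ), sq_nonneg (a - e), sq_nonneg (e - a),
      sq_nonneg (ℓ - a), mul_nonneg (sub_nonneg.mpr h1) (sub_nonneg.mpr h2),
      mul_nonneg (sub_nonneg.mpr h2) (sub_nonneg.mpr h1)]

lemma abs_max_zero_le (x : ℝ) : ‖max x 0‖ ≤ ‖x‖ := by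
  rw [Real.norm_eq_abs, Real.norm_eq_abs, abs_of_nonneg (le_max_right x 0)]
  exact max_le (le_abs_self x) (abs_nonneg x)

theorem expectile_unique_minimizer {Ω : Type*} [MeasurableSpace Ω] (P : Measure Ω)
    [IsProbabilityMeasure P] (L : Ω → ℝ) (hL : MemLp L 2 P)
    (τ : ℝ) (hτ0 : 0 < τ) (hτ1 : τ < 1) (e : ℝ)
    (he : τ * ∫ ω, max (L ω - e) 0 ∂P = (1 - τ) * ∫ ω, max (e - L ω) 0 ∂P) :
    ∀ ℓ : ℝ, ℓ ≠ e →
      (∫ ω, (τ * max (L ω - e) 0 ^ 2 + (1 - τ) * max (e - L ω) 0 ^ 2) ∂P)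
        < ∫ ω, (τ * max (L ω - ℓ) 0 ^ 2 + (1 - τ) * max (ℓ - L ω) 0 ^ 2) ∂P := by
  intro ℓ hℓ
  set m := min τ (1 - τ) with hm
  have hm0 : 0 < m := lt_min hτ0 (by linarith)
  -- Memℒp 2 of the positive parts
  have hA2 : ∀ c : ℝ, MemLp (fun ω => max (L ω - c) 0) 2 P := by
    intro c
    have h := hL.sub (memLp_const c)
    exact h.of_le (h.aestronglyMeasurable.sup aestronglyMeasurable_const)
      (Filter.Eventually.of_forall fun ω => abs_max_zero_le _)
  have hB2 : ∀ c : ℝ, MemLp (fun ω => max (c - L ω) 0) 2 P := by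
    intro c
    have h := (memLp_const c).sub hL
    exact h.of_le (h.aestronglyMeasurable.sup aestronglyMeasurable_const)
      (Filter.Eventually.of_forall fun ω => abs_max_zero_le _)
  have hA1 : ∀ c : ℝ, Integrable (fun ω => max (L ω - c) 0) P :=
    fun c => (hA2 c).integrable one_le_two
  have hB1 : ∀ c : ℝ, Integrable (fun ω => max (c - L ω) 0) P :=
    fun c => (hB2 c).integrable one_le_two
  have hsq : ∀ c : ℝ,
      Integrable (fun ω => τ * max (L ω - c) 0 ^ 2 + (1 - τ) * max (c - L ω) 0 ^ 2) P :=
    fun c => ((hA2 c).integrable_sq.const_mul τ).add ((hB2 c).integrable_sq.const_mul (1 - τ))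
  have hlin : Integrable
      (fun ω => (2 * τ * max (L ω - e) 0 - 2 * (1 - τ) * max (e - L ω) 0) * (e - ℓ)) P :=
    (((hA1 e).const_mul (2 * τ)).sub ((hB1 e).const_mul (2 * (1 - τ)))).mul_const (e - ℓ)
  have hLHS1 : Integrable (fun ω =>
      (τ * max (L ω - e) 0 ^ 2 + (1 - τ) * max (e - L ω) 0 ^ 2)
        + (2 * τ * max (L ω - e) 0 - 2 * (1 - τ) * max (e - L ω) 0) * (e - ℓ)) P :=
    (hsq e).add hlin
  have hLHS : Integrable (fun ω =>
      (τ * max (L ω - e) 0 ^ 2 + (1 - τ) * max (e - L ω) 0 ^ 2)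
        + (2 * τ * max (L ω - e) 0 - 2 * (1 - τ) * max (e - L ω) 0) * (e - ℓ)
        + m * (e - ℓ) ^ 2) P :=
    hLHS1.add (integrable_const _)
  have hle := integral_mono hLHS (hsq ℓ) (fun ω => key_pt τ ℓ e (L ω) hτ0 hτ1)
  rw [integral_add hLHS1 (integrable_const _),
    integral_add (hsq e) hlin, integral_const, probReal_univ] at hle
  have hzero : (∫ ω, (2 * τ * max (L ω - e) 0 - 2 * (1 - τ) * max (e - L ω) 0) * (e - ℓ) ∂P)
      = 0 := by
    rw [integral_mul_const, integral_sub ((hA1 e).const_mul _) ((hB1 e).const_mul _),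
      integral_const_mul, integral_const_mul]
    have : 2 * τ * ∫ ω, max (L ω - e) 0 ∂P - 2 * (1 - τ) * ∫ ω, max (e - L ω) 0 ∂P = 0 := by
      linarith [he]
    rw [this, zero_mul]
  rw [hzero, add_zero] at hle
  have hne : e - ℓ ≠ 0 := sub_ne_zero.mpr (Ne.symm hℓ)
  have hpos : 0 < m * (e - ℓ) ^ 2 :=
    mul_pos hm0 ((sq_nonneg _).lt_of_ne (fun h => hne (by
      have := h.symm; exact pow_eq_zero_iff (two_ne_zero) |>.mp this)))
  simp only [ENNReal.toReal_one, smul_eq_mul, one_mul] at hle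
  linarith
end

section
/- For 1/2 ≤ τ < 1 and integrable random variables L₁, L₂ on a common probability space, the τ-expectile is subadditive: e_τ(L₁ + L₂) ≤ e_τ(L₁) + e_τ(L₂). -/
open MeasureTheory

lemma expectile_pos_part_eq {Ω : Type*} [MeasurableSpace Ω] (P : Measure Ω)
    [IsProbabilityMeasure P] (L : Ω → ℝ) (hL : Integrable L P) (c : ℝ) :
    ∫ ω, max (L ω - c) 0 ∂P = ((∫ ω, L ω ∂P) - c) + ∫ ω, max (c - L ω) 0 ∂P := by
  have h1 : Integrable (fun ω => L ω - c) P := hL.sub (integrable_const c)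
  have h2 : Integrable (fun ω => max (c - L ω) 0) P :=
    ((integrable_const c).sub hL).pos_part
  have hpt : ∀ ω, max (L ω - c) 0 = (L ω - c) + max (c - L ω) 0 := by
    intro ω
    rcases le_total (L ω) c with h | h
    · rw [max_eq_right (sub_nonpos.2 h), max_eq_left (sub_nonneg.2 h)]; ring
    · rw [max_eq_left (sub_nonneg.2 h), max_eq_right (sub_nonpos.2 h)]; ring
  calc ∫ ω, max (L ω - c) 0 ∂P
      = ∫ ω, ((L ω - c) + max (c - L ω) 0) ∂P := by
        exact integral_congr_ae (Filter.Eventually.of_forall hpt)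
    _ = (∫ ω, (L ω - c) ∂P) + ∫ ω, max (c - L ω) 0 ∂P := integral_add h1 h2
    _ = ((∫ ω, L ω ∂P) - c) + ∫ ω, max (c - L ω) 0 ∂P := by
        rw [integral_sub hL (integrable_const c), integral_const]
        simp

theorem expectile_subadditive {Ω : Type*} [MeasurableSpace Ω] (P : Measure Ω)
    [IsProbabilityMeasure P] (L₁ L₂ : Ω → ℝ) (hL₁ : Integrable L₁ P) (hL₂ : Integrable L₂ P)
    (τ : ℝ) (hτ0 : 1 / 2 ≤ τ) (hτ1 : τ < 1) (ℓ₁ ℓ₂ ℓ₁₂ : ℝ)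
    (hℓ₁ : τ * ∫ ω, max (L₁ ω - ℓ₁) 0 ∂P = (1 - τ) * ∫ ω, max (ℓ₁ - L₁ ω) 0 ∂P)
    (hℓ₂ : τ * ∫ ω, max (L₂ ω - ℓ₂) 0 ∂P = (1 - τ) * ∫ ω, max (ℓ₂ - L₂ ω) 0 ∂P)
    (hℓ₁₂ : τ * ∫ ω, max ((L₁ ω + L₂ ω) - ℓ₁₂) 0 ∂P
        = (1 - τ) * ∫ ω, max (ℓ₁₂ - (L₁ ω + L₂ ω)) 0 ∂P) :
    ℓ₁₂ ≤ ℓ₁ + ℓ₂ := by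
  by_contra hlt
  push_neg at hlt
  set s := ℓ₁ + ℓ₂ with hs
  have hL₁₂ : Integrable (fun ω => L₁ ω + L₂ ω) P := hL₁.add hL₂
  -- rewrite the three conditions
  rw [expectile_pos_part_eq P L₁ hL₁ ℓ₁] at hℓ₁
  rw [expectile_pos_part_eq P L₂ hL₂ ℓ₂] at hℓ₂
  rw [expectile_pos_part_eq P (fun ω => L₁ ω + L₂ ω) hL₁₂ ℓ₁₂] at hℓ₁₂
  -- integrability facts
  have i1 : Integrable (fun ω => max (ℓ₁ - L₁ ω) 0) P :=
    ((integrable_const ℓ₁).sub hL₁).pos_part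
  have i2 : Integrable (fun ω => max (ℓ₂ - L₂ ω) 0) P :=
    ((integrable_const ℓ₂).sub hL₂).pos_part
  have i12 : Integrable (fun ω => max (ℓ₁₂ - (L₁ ω + L₂ ω)) 0) P :=
    ((integrable_const ℓ₁₂).sub hL₁₂).pos_part
  have is : Integrable (fun ω => max (s - (L₁ ω + L₂ ω)) 0) P :=
    ((integrable_const s).sub hL₁₂).pos_part
  -- Lipschitz bound: I⁻(ℓ₁₂) ≤ I⁻(s) + (ℓ₁₂ - s)
  have hlip : ∫ ω, max (ℓ₁₂ - (L₁ ω + L₂ ω)) 0 ∂P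
      ≤ (∫ ω, max (s - (L₁ ω + L₂ ω)) 0 ∂P) + (ℓ₁₂ - s) := by
    have : ∫ ω, max (ℓ₁₂ - (L₁ ω + L₂ ω)) 0 ∂P
        ≤ ∫ ω, (max (s - (L₁ ω + L₂ ω)) 0 + (ℓ₁₂ - s)) ∂P := by
      refine integral_mono i12 (is.add (integrable_const _)) fun ω => ?_
      have h1 := le_max_left (s - (L₁ ω + L₂ ω)) 0
      have h2 := le_max_right (s - (L₁ ω + L₂ ω)) 0
      exact max_le (by linarith) (by linarith)
    rwa [integral_add is (integrable_const _), integral_const,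
      probReal_univ, one_smul] at this
  -- subadditivity: I⁻(L₁+L₂, s) ≤ I⁻(L₁,ℓ₁) + I⁻(L₂,ℓ₂)
  have hsub : ∫ ω, max (s - (L₁ ω + L₂ ω)) 0 ∂P
      ≤ (∫ ω, max (ℓ₁ - L₁ ω) 0 ∂P) + ∫ ω, max (ℓ₂ - L₂ ω) 0 ∂P := by
    have : ∫ ω, max (s - (L₁ ω + L₂ ω)) 0 ∂P
        ≤ ∫ ω, (max (ℓ₁ - L₁ ω) 0 + max (ℓ₂ - L₂ ω) 0) ∂P := by
      refine integral_mono is (i1.add i2) fun ω => ?_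
      have a1 := le_max_left (ℓ₁ - L₁ ω) 0
      have a2 := le_max_right (ℓ₁ - L₁ ω) 0
      have b1 := le_max_left (ℓ₂ - L₂ ω) 0
      have b2 := le_max_right (ℓ₂ - L₂ ω) 0
      exact max_le (by simp only [hs]; linarith) (by linarith)
    rwa [integral_add i1 i2] at this
  -- expectation of the sum
  have hsumE : ∫ ω, (L₁ ω + L₂ ω) ∂P = (∫ ω, L₁ ω ∂P) + ∫ ω, L₂ ω ∂P :=
    integral_add hL₁ hL₂
  rw [hsumE] at hℓ₁₂
  have hτ : (0:ℝ) ≤ 2 * τ - 1 := by linarith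
  nlinarith [mul_le_mul_of_nonneg_left hlip hτ, mul_le_mul_of_nonneg_left hsub hτ]
end

section
/- For 0 < τ ≤ 1/2 and integrable random variables L₁, L₂ on a common probability space, the τ-expectile is superadditive: e_τ(L₁ + L₂) ≥ e_τ(L₁) + e_τ(L₂). -/
open MeasureTheory

lemma expectile_aux {Ω : Type*} [MeasurableSpace Ω] (P : Measure Ω)
    [IsProbabilityMeasure P] (L : Ω → ℝ) (hL : Integrable L P) (τ ℓ : ℝ)
    (h : τ * ∫ ω, max (L ω - ℓ) 0 ∂P = (1 - τ) * ∫ ω, max (ℓ - L ω) 0 ∂P) :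
    τ * ((∫ ω, L ω ∂P) - ℓ) = (1 - 2*τ) * ∫ ω, max (ℓ - L ω) 0 ∂P := by
  have hA : Integrable (fun ω => max (L ω - ℓ) 0) P := (hL.sub (integrable_const ℓ)).pos_part
  have hB : Integrable (fun ω => max (ℓ - L ω) 0) P := ((integrable_const ℓ).sub hL).pos_part
  have hd : (∫ ω, max (L ω - ℓ) 0 ∂P) - (∫ ω, max (ℓ - L ω) 0 ∂P)
      = (∫ ω, L ω ∂P) - ℓ := by
    rw [← integral_sub hA hB]
    have heq : (fun ω => max (L ω - ℓ) 0 - max (ℓ - L ω) 0) = fun ω => L ω - ℓ := by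
      funext ω
      rcases le_total (L ω) ℓ with hc | hc <;>
        simp [max_eq_left, max_eq_right, sub_nonneg.mpr hc, sub_nonpos.mpr hc]
    rw [heq, integral_sub hL (integrable_const ℓ), integral_const]
    simp
  linear_combination h - τ * hd

theorem expectile_superadditive {Ω : Type*} [MeasurableSpace Ω] (P : Measure Ω)
    [IsProbabilityMeasure P] (L₁ L₂ : Ω → ℝ) (hL₁ : Integrable L₁ P) (hL₂ : Integrable L₂ P)
    (τ : ℝ) (hτ0 : 0 < τ) (hτ1 : τ ≤ 1 / 2) (ℓ₁ ℓ₂ ℓ₁₂ : ℝ)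
    (hℓ₁ : τ * ∫ ω, max (L₁ ω - ℓ₁) 0 ∂P = (1 - τ) * ∫ ω, max (ℓ₁ - L₁ ω) 0 ∂P)
    (hℓ₂ : τ * ∫ ω, max (L₂ ω - ℓ₂) 0 ∂P = (1 - τ) * ∫ ω, max (ℓ₂ - L₂ ω) 0 ∂P)
    (hℓ₁₂ : τ * ∫ ω, max ((L₁ ω + L₂ ω) - ℓ₁₂) 0 ∂P
        = (1 - τ) * ∫ ω, max (ℓ₁₂ - (L₁ ω + L₂ ω)) 0 ∂P) :
    ℓ₁ + ℓ₂ ≤ ℓ₁₂ := by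
  have k1 := expectile_aux P L₁ hL₁ τ ℓ₁ hℓ₁
  have k2 := expectile_aux P L₂ hL₂ τ ℓ₂ hℓ₂
  have k12 := expectile_aux P (fun ω => L₁ ω + L₂ ω) (hL₁.add hL₂) τ ℓ₁₂ hℓ₁₂
  rw [integral_add hL₁ hL₂] at k12
  have hB1 : Integrable (fun ω => max (ℓ₁ - L₁ ω) 0) P :=
    ((integrable_const ℓ₁).sub hL₁).pos_part
  have hB2 : Integrable (fun ω => max (ℓ₂ - L₂ ω) 0) P :=
    ((integrable_const ℓ₂).sub hL₂).pos_part
  have hB12 : Integrable (fun ω => max (ℓ₁₂ - (L₁ ω + L₂ ω)) 0) P :=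
    ((integrable_const ℓ₁₂).sub (hL₁.add hL₂)).pos_part
  set d := ℓ₁₂ - ℓ₁ - ℓ₂ with hdef
  have hpt : ∀ ω, max (ℓ₁₂ - (L₁ ω + L₂ ω)) 0
      ≤ max (ℓ₁ - L₁ ω) 0 + (max (ℓ₂ - L₂ ω) 0 + max d 0) := by
    intro ω
    have h1 : max ((ℓ₁ - L₁ ω) + ((ℓ₂ - L₂ ω) + d)) (0 + 0)
        ≤ max (ℓ₁ - L₁ ω) 0 + max ((ℓ₂ - L₂ ω) + d) 0 := max_add_add_le_max_add_max
    have h2 : max ((ℓ₂ - L₂ ω) + d) (0 + 0)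
        ≤ max (ℓ₂ - L₂ ω) 0 + max d 0 := max_add_add_le_max_add_max
    have he : ℓ₁₂ - (L₁ ω + L₂ ω) = (ℓ₁ - L₁ ω) + ((ℓ₂ - L₂ ω) + d) := by ring
    rw [he]
    calc max ((ℓ₁ - L₁ ω) + ((ℓ₂ - L₂ ω) + d)) 0
        = max ((ℓ₁ - L₁ ω) + ((ℓ₂ - L₂ ω) + d)) (0 + 0) := by rw [add_zero]
      _ ≤ max (ℓ₁ - L₁ ω) 0 + max ((ℓ₂ - L₂ ω) + d) 0 := h1
      _ ≤ max (ℓ₁ - L₁ ω) 0 + (max (ℓ₂ - L₂ ω) 0 + max d 0) := by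
          refine add_le_add le_rfl ?_
          simpa using h2
  have hint : (∫ ω, max (ℓ₁₂ - (L₁ ω + L₂ ω)) 0 ∂P)
      ≤ ∫ ω, (max (ℓ₁ - L₁ ω) 0 + (max (ℓ₂ - L₂ ω) 0 + max d 0)) ∂P :=
    integral_mono hB12 (hB1.add (hB2.add (integrable_const _))) hpt
  have hsum : (∫ ω, (max (ℓ₁ - L₁ ω) 0 + (max (ℓ₂ - L₂ ω) 0 + max d 0)) ∂P)
      = (∫ ω, max (ℓ₁ - L₁ ω) 0 ∂P) + ((∫ ω, max (ℓ₂ - L₂ ω) 0 ∂P) + max d 0) := by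
    have hB2d : Integrable (fun ω => max (ℓ₂ - L₂ ω) 0 + max d 0) P :=
      hB2.add (integrable_const _)
    rw [integral_add hB1 hB2d,
      integral_add hB2 (integrable_const _), integral_const]
    simp
  rw [hsum] at hint
  by_contra hc
  push_neg at hc
  have hd0 : max d 0 = 0 := max_eq_right (by simp [hdef]; linarith)
  rw [hd0] at hint
  nlinarith [mul_le_mul_of_nonneg_left hint (by linarith : (0:ℝ) ≤ 1 - 2*τ)]
end

section
/- For 0 < τ < 1, the τ-expectile is Lipschitz with respect to the L¹ distance with constant K = max{τ/(1−τ), (1−τ)/τ}: for integrable random variables X, Y on the same probability space, |e_τ(X) − e_τ(Y)| ≤ K·E[|X − Y|]. -/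
open MeasureTheory

/-- The expectile loss function `Fe τ t = τ t⁺ - (1-τ) t⁻`. -/
noncomputable def Fe (τ t : ℝ) : ℝ := τ * max t 0 - (1 - τ) * max (-t) 0

lemma Fe_bounds (τ s t : ℝ) (hst : s ≤ t) :
    min τ (1 - τ) * (t - s) ≤ Fe τ t - Fe τ s ∧
      Fe τ t - Fe τ s ≤ max τ (1 - τ) * (t - s) := by
  have hA : 0 ≤ max t 0 - max s 0 := sub_nonneg.mpr (max_le_max hst le_rfl)
  have hB : 0 ≤ max (-s) 0 - max (-t) 0 :=
    sub_nonneg.mpr (max_le_max (neg_le_neg hst) le_rfl)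
  have hAB : (max t 0 - max s 0) + (max (-s) 0 - max (-t) 0) = t - s := by
    have h1 := max_zero_sub_eq_self t
    have h2 := max_zero_sub_eq_self s
    linarith
  have hm1 : min τ (1 - τ) ≤ τ := min_le_left _ _
  have hm2 : min τ (1 - τ) ≤ 1 - τ := min_le_right _ _
  have hM1 : τ ≤ max τ (1 - τ) := le_max_left _ _
  have hM2 : 1 - τ ≤ max τ (1 - τ) := le_max_right _ _
  unfold Fe
  constructor <;> nlinarith [hA, hB, hAB]

lemma Fe_integrable {Ω : Type*} [MeasurableSpace Ω] (P : Measure Ω)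
    [IsProbabilityMeasure P] {Z : Ω → ℝ} (hZ : Integrable Z P) (τ ℓ : ℝ) :
    Integrable (fun ω => Fe τ (Z ω - ℓ)) P := by
  have h1 : Integrable (fun ω => max (Z ω - ℓ) 0) P :=
    (hZ.sub (integrable_const ℓ)).pos_part
  have h2 : Integrable (fun ω => max (-(Z ω - ℓ)) 0) P := by
    have : Integrable (fun ω => max (ℓ - Z ω) 0) P :=
      ((integrable_const ℓ).sub hZ).pos_part
    simpa [neg_sub] using this
  exact (h1.const_mul τ).sub (h2.const_mul (1 - τ))

lemma Fe_integral {Ω : Type*} [MeasurableSpace Ω] (P : Measure Ω)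
    [IsProbabilityMeasure P] {Z : Ω → ℝ} (hZ : Integrable Z P) (τ ℓ : ℝ) :
    ∫ ω, Fe τ (Z ω - ℓ) ∂P
      = τ * ∫ ω, max (Z ω - ℓ) 0 ∂P - (1 - τ) * ∫ ω, max (ℓ - Z ω) 0 ∂P := by
  have h1 : Integrable (fun ω => max (Z ω - ℓ) 0) P :=
    (hZ.sub (integrable_const ℓ)).pos_part
  have h2 : Integrable (fun ω => max (ℓ - Z ω) 0) P :=
    ((integrable_const ℓ).sub hZ).pos_part
  have h2' : Integrable (fun ω => max (-(Z ω - ℓ)) 0) P := by simpa [neg_sub] using h2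
  unfold Fe
  rw [integral_sub ((h1.const_mul τ)) ((h2'.const_mul (1 - τ))),
    integral_const_mul, integral_const_mul]
  simp [neg_sub]

lemma expectile_key {Ω : Type*} [MeasurableSpace Ω] (P : Measure Ω)
    [IsProbabilityMeasure P] (X Y : Ω → ℝ) (hX : Integrable X P) (hY : Integrable Y P)
    (τ : ℝ) (hτ0 : 0 < τ) (hτ1 : τ < 1) (ℓX ℓY : ℝ)
    (hℓX : τ * ∫ ω, max (X ω - ℓX) 0 ∂P = (1 - τ) * ∫ ω, max (ℓX - X ω) 0 ∂P)
    (hℓY : τ * ∫ ω, max (Y ω - ℓY) 0 ∂P = (1 - τ) * ∫ ω, max (ℓY - Y ω) 0 ∂P)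
    (hle : ℓY ≤ ℓX) :
    min τ (1 - τ) * (ℓX - ℓY) ≤ max τ (1 - τ) * ∫ ω, |X ω - Y ω| ∂P := by
  have h0X : ∫ ω, Fe τ (X ω - ℓX) ∂P = 0 := by
    rw [Fe_integral P hX τ ℓX]; linarith
  have h0Y : ∫ ω, Fe τ (Y ω - ℓY) ∂P = 0 := by
    rw [Fe_integral P hY τ ℓY]; linarith
  have iXY : Integrable (fun ω => Fe τ (X ω - ℓY)) P := Fe_integrable P hX τ ℓY
  have iXX : Integrable (fun ω => Fe τ (X ω - ℓX)) P := Fe_integrable P hX τ ℓX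
  have iYY : Integrable (fun ω => Fe τ (Y ω - ℓY)) P := Fe_integrable P hY τ ℓY
  have step1 : min τ (1 - τ) * (ℓX - ℓY)
      ≤ ∫ ω, (Fe τ (X ω - ℓY) - Fe τ (X ω - ℓX)) ∂P := by
    have := integral_mono (μ := P)
      (integrable_const (min τ (1 - τ) * (ℓX - ℓY)))
      (iXY.sub iXX)
      (fun ω => by
        have h := (Fe_bounds τ (X ω - ℓX) (X ω - ℓY) (by linarith)).1
        have ht : (X ω - ℓY) - (X ω - ℓX) = ℓX - ℓY := by ring
        rw [ht] at h
        simpa using h)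
    simpa using this
  have step2 : ∫ ω, (Fe τ (X ω - ℓY) - Fe τ (X ω - ℓX)) ∂P
      = ∫ ω, (Fe τ (X ω - ℓY) - Fe τ (Y ω - ℓY)) ∂P := by
    rw [integral_sub iXY iXX, integral_sub iXY iYY, h0X, h0Y]
  have step3 : ∫ ω, (Fe τ (X ω - ℓY) - Fe τ (Y ω - ℓY)) ∂P
      ≤ ∫ ω, max τ (1 - τ) * |X ω - Y ω| ∂P := by
    apply integral_mono (iXY.sub iYY) (((hX.sub hY).abs).const_mul _)
    intro ω
    have hM0 : 0 ≤ max τ (1 - τ) := le_trans hτ0.le (le_max_left _ _)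
    rcases le_total (Y ω - ℓY) (X ω - ℓY) with h | h
    · have hb := (Fe_bounds τ (Y ω - ℓY) (X ω - ℓY) h).2
      have habs : |X ω - Y ω| = (X ω - ℓY) - (Y ω - ℓY) := by
        rw [abs_of_nonneg (by linarith)]; ring
      simp only [Pi.sub_apply]
      rw [habs]
      exact hb
    · have hb := (Fe_bounds τ (X ω - ℓY) (Y ω - ℓY) h).1
      have hm0 : 0 ≤ min τ (1 - τ) := le_min hτ0.le (by linarith)
      have : Fe τ (X ω - ℓY) - Fe τ (Y ω - ℓY) ≤ 0 := by
        nlinarith [mul_nonneg hm0 (sub_nonneg.mpr h)]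
      exact le_trans this (mul_nonneg hM0 (abs_nonneg _))
  have hfin : ∫ ω, max τ (1 - τ) * |X ω - Y ω| ∂P
      = max τ (1 - τ) * ∫ ω, |X ω - Y ω| ∂P := integral_const_mul _ _
  linarith [step1, step2 ▸ step1, step3]

theorem expectile_lipschitz_L1 {Ω : Type*} [MeasurableSpace Ω] (P : Measure Ω)
    [IsProbabilityMeasure P] (X Y : Ω → ℝ) (hX : Integrable X P) (hY : Integrable Y P)
    (τ : ℝ) (hτ0 : 0 < τ) (hτ1 : τ < 1) (ℓX ℓY : ℝ)
    (hℓX : τ * ∫ ω, max (X ω - ℓX) 0 ∂P = (1 - τ) * ∫ ω, max (ℓX - X ω) 0 ∂P)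
    (hℓY : τ * ∫ ω, max (Y ω - ℓY) 0 ∂P = (1 - τ) * ∫ ω, max (ℓY - Y ω) 0 ∂P) :
    |ℓX - ℓY| ≤ max (τ / (1 - τ)) ((1 - τ) / τ) * ∫ ω, |X ω - Y ω| ∂P := by
  have hτ1' : 0 < 1 - τ := by linarith
  have hm0 : 0 < min τ (1 - τ) := lt_min hτ0 hτ1'
  have hc : max τ (1 - τ) = max (τ / (1 - τ)) ((1 - τ) / τ) * min τ (1 - τ) := by
    rcases le_total τ (1 - τ) with h | h
    · rw [max_eq_right h, min_eq_left h,
        max_eq_right (by rw [div_le_div_iff₀ hτ1' hτ0]; nlinarith)]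
      field_simp
    · rw [max_eq_left h, min_eq_right h,
        max_eq_left (by rw [div_le_div_iff₀ hτ0 hτ1']; nlinarith)]
      field_simp
  have hsymm : ∫ ω, |Y ω - X ω| ∂P = ∫ ω, |X ω - Y ω| ∂P := by
    simp [abs_sub_comm]
  rcases le_total ℓY ℓX with h | h
  · have key := expectile_key P X Y hX hY τ hτ0 hτ1 ℓX ℓY hℓX hℓY h
    rw [abs_of_nonneg (by linarith)]
    rw [hc] at key
    nlinarith [key, hm0]
  · have key := expectile_key P Y X hY hX τ hτ0 hτ1 ℓY ℓX hℓY hℓX h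
    rw [hsymm] at key
    rw [abs_of_nonpos (by linarith)]
    rw [hc] at key
    nlinarith [key, hm0]
end

section
/- VaR is comonotonically additive: if L₁ = f₁(X) and L₂ = f₂(X) for a real random variable X and non-decreasing left-continuous functions f₁, f₂, then for 0 < α < 1, VaR_α(L₁ + L₂) = VaR_α(L₁) + VaR_α(L₂). -/
open MeasureTheory

noncomputable def VaR {Ω : Type*} [MeasurableSpace Ω] (P : Measure Ω) (α : ℝ) (L : Ω → ℝ) : ℝ :=
  sInf {ℓ : ℝ | ENNReal.ofReal α ≤ P {ω | L ω ≤ ℓ}}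

section Aux

variable {Ω : Type*} [MeasurableSpace Ω] (P : Measure Ω) [IsProbabilityMeasure P]
  (X : Ω → ℝ) {α : ℝ}

lemma VaR_set_nonempty (hα1 : α < 1) :
    {ℓ : ℝ | ENNReal.ofReal α ≤ P {ω | X ω ≤ ℓ}}.Nonempty := by
  have hmono : Monotone (fun n : ℕ => {ω | X ω ≤ (n : ℝ)}) := by
    intro n m hnm ω hω
    simp only [Set.mem_setOf_eq] at hω ⊢
    exact le_trans hω (by exact_mod_cast hnm)
  have hU : (⋃ n : ℕ, {ω | X ω ≤ (n : ℝ)}) = Set.univ := by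
    ext ω
    simp only [Set.mem_iUnion, Set.mem_univ, iff_true, Set.mem_setOf_eq]
    exact exists_nat_ge (X ω)
  have htend := tendsto_measure_iUnion_atTop (μ := P) hmono
  rw [hU, measure_univ] at htend
  have hlt : ENNReal.ofReal α < 1 := ENNReal.ofReal_lt_one.2 hα1
  obtain ⟨n, hn⟩ := (htend.eventually (eventually_gt_nhds hlt)).exists
  exact ⟨n, le_of_lt hn⟩

lemma VaR_set_bddBelow (hX : Measurable X) (hα0 : 0 < α) :
    BddBelow {ℓ : ℝ | ENNReal.ofReal α ≤ P {ω | X ω ≤ ℓ}} := by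
  have hanti : Antitone (fun n : ℕ => {ω | X ω ≤ -(n : ℝ)}) := by
    intro n m hnm ω hω
    simp only [Set.mem_setOf_eq] at hω ⊢
    have : -(m : ℝ) ≤ -(n : ℝ) := by
      have : (n : ℝ) ≤ m := by exact_mod_cast hnm
      linarith
    linarith
  have hI : (⋂ n : ℕ, {ω | X ω ≤ -(n : ℝ)}) = ∅ := by
    ext ω
    simp only [Set.mem_iInter, Set.mem_empty_iff_false, iff_false, Set.mem_setOf_eq, not_forall]
    obtain ⟨n, hn⟩ := exists_nat_gt (-X ω)
    exact ⟨n, by push_neg; linarith⟩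
  have htend := tendsto_measure_iInter_atTop (μ := P)
    (s := fun n : ℕ => {ω | X ω ≤ -(n : ℝ)})
    (fun n => (hX measurableSet_Iic).nullMeasurableSet) hanti
    ⟨0, measure_ne_top P _⟩
  rw [hI, measure_empty] at htend
  have hlt : (0 : ENNReal) < ENNReal.ofReal α := ENNReal.ofReal_pos.2 hα0
  obtain ⟨n, hn⟩ := (htend.eventually (eventually_lt_nhds hlt)).exists
  refine ⟨-(n : ℝ), fun ℓ hℓ => ?_⟩
  by_contra h
  push_neg at h
  have hmono : P {ω | X ω ≤ ℓ} ≤ P {ω | X ω ≤ -(n : ℝ)} :=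
    measure_mono fun ω hω => le_trans hω (le_of_lt h)
  exact absurd (le_trans hℓ hmono) (not_le.2 hn)

lemma VaR_mem (hX : Measurable X) (hα0 : 0 < α) (hα1 : α < 1) :
    ENNReal.ofReal α ≤ P {ω | X ω ≤ VaR P α X} := by
  have hne := VaR_set_nonempty P X hα1
  set q := VaR P α X with hq
  have hanti : Antitone (fun n : ℕ => {ω | X ω ≤ q + 1 / ((n : ℝ) + 1)}) := by
    intro n m hnm ω hω
    simp only [Set.mem_setOf_eq] at hω ⊢
    have h1 : 1 / ((m : ℝ) + 1) ≤ 1 / ((n : ℝ) + 1) := by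
      apply one_div_le_one_div_of_le (by positivity)
      have : (n : ℝ) ≤ m := by exact_mod_cast hnm
      linarith
    linarith
  have hI : (⋂ n : ℕ, {ω | X ω ≤ q + 1 / ((n : ℝ) + 1)}) = {ω | X ω ≤ q} := by
    ext ω
    simp only [Set.mem_iInter, Set.mem_setOf_eq]
    constructor
    · intro h
      refine le_of_forall_pos_le_add fun ε hε => ?_
      obtain ⟨n, hn⟩ := exists_nat_one_div_lt hε
      exact le_trans (h n) (by linarith)
    · intro h n
      have : (0:ℝ) < 1 / ((n : ℝ) + 1) := by positivity
      linarith
  have htend := tendsto_measure_iInter_atTop (μ := P)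
    (s := fun n : ℕ => {ω | X ω ≤ q + 1 / ((n : ℝ) + 1)})
    (fun n => (hX measurableSet_Iic).nullMeasurableSet) hanti
    ⟨0, measure_ne_top P _⟩
  rw [hI] at htend
  refine ge_of_tendsto' htend fun n => ?_
  have hpos : (0:ℝ) < 1 / ((n : ℝ) + 1) := by positivity
  have hlt : sInf {ℓ : ℝ | ENNReal.ofReal α ≤ P {ω | X ω ≤ ℓ}} < q + 1 / ((n : ℝ) + 1) := by
    have : q = sInf {ℓ : ℝ | ENNReal.ofReal α ≤ P {ω | X ω ≤ ℓ}} := hq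
    linarith [this.ge]
  obtain ⟨ℓ, hℓS, hℓq⟩ := exists_lt_of_csInf_lt hne hlt
  exact le_trans hℓS (measure_mono fun ω hω => le_trans hω (le_of_lt hℓq))

lemma VaR_comp (hX : Measurable X) (f : ℝ → ℝ) (hf : Monotone f)
    (hfc : ∀ x : ℝ, ContinuousWithinAt f (Set.Iio x) x)
    (hα0 : 0 < α) (hα1 : α < 1) :
    VaR P α (fun ω => f (X ω)) = f (VaR P α X) := by
  set q := VaR P α X with hq
  have hmem : ENNReal.ofReal α ≤ P {ω | f (X ω) ≤ f q} :=
    le_trans (VaR_mem P X hX hα0 hα1) (measure_mono fun ω hω => hf hω)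
  have hlb : ∀ ℓ ∈ {ℓ : ℝ | ENNReal.ofReal α ≤ P {ω | f (X ω) ≤ ℓ}}, f q ≤ ℓ := by
    intro ℓ hℓ
    by_contra h
    push_neg at h
    have hev : ∀ᶠ x in nhdsWithin q (Set.Iio q), ℓ < f x :=
      (hfc q).eventually (eventually_gt_nhds h)
    obtain ⟨x, hx, hxq⟩ := (hev.and self_mem_nhdsWithin).exists
    have hxS : ¬ ENNReal.ofReal α ≤ P {ω | X ω ≤ x} := by
      intro hmemx
      have : q ≤ x := csInf_le (VaR_set_bddBelow P X hX hα0) hmemx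
      exact absurd this (not_le.2 hxq)
    have hsub : {ω | f (X ω) ≤ ℓ} ⊆ {ω | X ω ≤ x} := by
      intro ω hω
      simp only [Set.mem_setOf_eq] at hω ⊢
      by_contra hc
      push_neg at hc
      exact absurd (le_trans (hf hc.le) hω) (not_le.2 hx)
    exact hxS (le_trans hℓ (measure_mono hsub))
  exact le_antisymm (csInf_le ⟨f q, hlb⟩ hmem) (le_csInf ⟨f q, hmem⟩ hlb)

end Aux

theorem VaR_comonotonic_additive {Ω : Type*} [MeasurableSpace Ω] (P : Measure Ω)
    [IsProbabilityMeasure P] (X : Ω → ℝ) (hX : Measurable X)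
    (f₁ f₂ : ℝ → ℝ) (hf₁ : Monotone f₁) (hf₂ : Monotone f₂)
    (hf₁c : ∀ x : ℝ, ContinuousWithinAt f₁ (Set.Iio x) x)
    (hf₂c : ∀ x : ℝ, ContinuousWithinAt f₂ (Set.Iio x) x)
    (α : ℝ) (hα0 : 0 < α) (hα1 : α < 1) :
    VaR P α (fun ω => f₁ (X ω) + f₂ (X ω))
      = VaR P α (fun ω => f₁ (X ω)) + VaR P α (fun ω => f₂ (X ω)) := by
  have h12 : VaR P α (fun ω => f₁ (X ω) + f₂ (X ω))
      = f₁ (VaR P α X) + f₂ (VaR P α X) :=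
    VaR_comp P X hX (fun x => f₁ x + f₂ x) (hf₁.add hf₂)
      (fun x => (hf₁c x).add (hf₂c x)) hα0 hα1
  rw [h12, VaR_comp P X hX f₁ hf₁ hf₁c hα0 hα1, VaR_comp P X hX f₂ hf₂ hf₂c hα0 hα1]
end

section
/- Expected Shortfall is subadditive: for 0 < α < 1 and integrable random variables L₁, L₂ on a common probability space, ES_α(L₁ + L₂) ≤ ES_α(L₁) + ES_α(L₂), where ES_α(L) = (1/(1−α)) ∫_α^1 q_u(L) du. -/
open MeasureTheory
open scoped ENNReal NNReal

noncomputable def quantile {Ω : Type*} [MeasurableSpace Ω] (P : Measure Ω) (u : ℝ)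
    (L : Ω → ℝ) : ℝ :=
  sInf {ℓ : ℝ | ENNReal.ofReal u ≤ P {ω | L ω ≤ ℓ}}

section aux
variable {Ω : Type*} [MeasurableSpace Ω] (P : Measure Ω) [IsProbabilityMeasure P]
  (L : Ω → ℝ) {u : ℝ}

lemma quantile_set_nonempty (hu : u < 1) :
    {ℓ : ℝ | ENNReal.ofReal u ≤ P {ω | L ω ≤ ℓ}}.Nonempty := by
  have hmono : Monotone (fun n : ℕ => {ω | L ω ≤ (n : ℝ)}) := by
    intro n m hnm ω hω
    simp only [Set.mem_setOf_eq] at hω ⊢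
    exact le_trans hω (by exact_mod_cast hnm)
  have hU : (⋃ n : ℕ, {ω | L ω ≤ (n : ℝ)}) = Set.univ := by
    ext ω; simp only [Set.mem_iUnion, Set.mem_univ, iff_true, Set.mem_setOf_eq]
    exact exists_nat_ge (L ω)
  have ht := tendsto_measure_iUnion_atTop (μ := P) hmono
  rw [hU, measure_univ] at ht
  have hlt : ENNReal.ofReal u < 1 := by
    rcases le_or_gt u 0 with h | h
    · simp [ENNReal.ofReal_eq_zero.2 h]
    · rw [show (1 : ℝ≥0∞) = ENNReal.ofReal 1 by simp]
      exact (ENNReal.ofReal_lt_ofReal_iff one_pos).2 hu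
  obtain ⟨n, hn⟩ := (ht.eventually (eventually_gt_nhds hlt)).exists
  exact ⟨(n : ℝ), le_of_lt hn⟩

lemma quantile_set_bddBelow (hLm : Measurable L) (hu : 0 < u) :
    BddBelow {ℓ : ℝ | ENNReal.ofReal u ≤ P {ω | L ω ≤ ℓ}} := by
  have hanti : Antitone (fun n : ℕ => {ω | L ω ≤ -(n : ℝ)}) := by
    intro n m hnm ω hω
    simp only [Set.mem_setOf_eq] at hω ⊢
    have : -(m : ℝ) ≤ -(n : ℝ) := by exact_mod_cast neg_le_neg (by exact_mod_cast hnm)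
    linarith
  have hI : (⋂ n : ℕ, {ω | L ω ≤ -(n : ℝ)}) = ∅ := by
    ext ω
    simp only [Set.mem_iInter, Set.mem_empty_iff_false, iff_false, Set.mem_setOf_eq, not_forall]
    obtain ⟨n, hn⟩ := exists_nat_gt (-L ω)
    exact ⟨n, by push_neg; linarith⟩
  have ht := tendsto_measure_iInter_atTop (μ := P)
    (s := fun n : ℕ => {ω | L ω ≤ -(n : ℝ)})
    (fun n => (hLm measurableSet_Iic).nullMeasurableSet) hanti ⟨0, measure_ne_top P _⟩
  rw [hI, measure_empty] at ht
  have hlt : (0 : ℝ≥0∞) < ENNReal.ofReal u := ENNReal.ofReal_pos.2 hu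
  obtain ⟨n, hn⟩ := (ht.eventually (eventually_lt_nhds hlt)).exists
  refine ⟨-(n : ℝ), fun x hx => ?_⟩
  by_contra hlt'
  push_neg at hlt'
  have : P {ω | L ω ≤ x} ≤ P {ω | L ω ≤ -(n : ℝ)} :=
    measure_mono (fun ω hω => le_trans hω hlt'.le)
  exact absurd (le_trans hx this) (not_le.2 hn)

lemma quantile_mem (hLm : Measurable L) (hu0 : 0 < u) (hu1 : u < 1) :
    ENNReal.ofReal u ≤ P {ω | L ω ≤ quantile P u L} := by
  set S := {ℓ : ℝ | ENNReal.ofReal u ≤ P {ω | L ω ≤ ℓ}} with hS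
  have hne := quantile_set_nonempty P L hu1
  have hbdd := quantile_set_bddBelow P L hLm hu0
  set q := quantile P u L with hq
  -- each q + 1/(n+1) is in S
  have hmem : ∀ n : ℕ, ENNReal.ofReal u ≤ P {ω | L ω ≤ q + 1/(n+1 : ℝ)} := by
    intro n
    have hpos : (0:ℝ) < 1/(n+1 : ℝ) := by positivity
    obtain ⟨x, hxS, hxlt⟩ := Real.lt_sInf_add_pos hne hpos
    exact le_trans hxS (measure_mono (fun ω hω => le_trans hω hxlt.le))
  have hanti : Antitone (fun n : ℕ => {ω | L ω ≤ q + 1/(n+1 : ℝ)}) := by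
    intro n m hnm ω hω
    simp only [Set.mem_setOf_eq] at hω ⊢
    have h1 : 1/(m+1:ℝ) ≤ 1/(n+1:ℝ) := by
      apply one_div_le_one_div_of_le (by positivity)
      exact_mod_cast Nat.add_le_add_right hnm 1
    linarith
  have hIeq : (⋂ n : ℕ, {ω | L ω ≤ q + 1/(n+1 : ℝ)}) = {ω | L ω ≤ q} := by
    ext ω
    simp only [Set.mem_iInter, Set.mem_setOf_eq]
    constructor
    · intro h
      by_contra hlt
      push_neg at hlt
      obtain ⟨n, hn⟩ := exists_nat_one_div_lt (sub_pos.2 hlt)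
      have := h n
      linarith [hn]
    · intro h n
      have : (0:ℝ) < 1/(n+1:ℝ) := by positivity
      linarith
  have ht := tendsto_measure_iInter_atTop (μ := P)
    (s := fun n : ℕ => {ω | L ω ≤ q + 1/(n+1 : ℝ)})
    (fun n => (hLm measurableSet_Iic).nullMeasurableSet) hanti ⟨0, measure_ne_top P _⟩
  rw [hIeq] at ht
  exact ge_of_tendsto ht (Filter.Eventually.of_forall hmem)

lemma quantile_le_iff (hLm : Measurable L) (hu0 : 0 < u) (hu1 : u < 1) {t : ℝ} :
    quantile P u L ≤ t ↔ ENNReal.ofReal u ≤ P {ω | L ω ≤ t} := by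
  constructor
  · intro h
    exact le_trans (quantile_mem P L hLm hu0 hu1)
      (measure_mono (fun ω hω => le_trans hω h))
  · intro h
    exact csInf_le (quantile_set_bddBelow P L hLm hu0) h

lemma measure_lt_quantile_le (hLm : Measurable L) (hu0 : 0 < u) :
    P {ω | L ω < quantile P u L} ≤ ENNReal.ofReal u := by
  set q := quantile P u L with hq
  have hnotmem : ∀ ℓ : ℝ, ℓ < q → P {ω | L ω ≤ ℓ} < ENNReal.ofReal u := by
    intro ℓ hℓ
    by_contra h
    push_neg at h
    exact absurd (csInf_le (quantile_set_bddBelow P L hLm hu0) h) (not_le.2 hℓ)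
  have hmono : Monotone (fun n : ℕ => {ω | L ω ≤ q - 1/(n+1 : ℝ)}) := by
    intro n m hnm ω hω
    simp only [Set.mem_setOf_eq] at hω ⊢
    have h1 : 1/(m+1:ℝ) ≤ 1/(n+1:ℝ) := by
      apply one_div_le_one_div_of_le (by positivity)
      exact_mod_cast Nat.add_le_add_right hnm 1
    linarith
  have hUeq : (⋃ n : ℕ, {ω | L ω ≤ q - 1/(n+1 : ℝ)}) = {ω | L ω < q} := by
    ext ω
    simp only [Set.mem_iUnion, Set.mem_setOf_eq]
    constructor
    · rintro ⟨n, hn⟩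
      have : (0:ℝ) < 1/(n+1:ℝ) := by positivity
      linarith
    · intro h
      obtain ⟨n, hn⟩ := exists_nat_one_div_lt (sub_pos.2 h)
      exact ⟨n, by linarith [hn]⟩
  have ht := tendsto_measure_iUnion_atTop (μ := P)
    (s := fun n : ℕ => {ω | L ω ≤ q - 1/(n+1 : ℝ)}) hmono
  rw [hUeq] at ht
  refine le_of_tendsto ht (Filter.Eventually.of_forall fun n => ?_)
  exact (hnotmem _ (sub_lt_self q (by positivity))).le

lemma quantile_mono_of (hLm : Measurable L) {u v : ℝ} (hu0 : 0 < u) (huv : u ≤ v) (hv1 : v < 1) :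
    quantile P u L ≤ quantile P v L := by
  apply csInf_le_csInf (quantile_set_bddBelow P L hLm hu0) (quantile_set_nonempty P L hv1)
  intro x hx
  exact le_trans (ENNReal.ofReal_le_ofReal huv) hx

lemma acerbi (hLm : Measurable L) (hL : Integrable L P) {α : ℝ} (hα0 : 0 < α) (hα1 : α < 1) :
    ∫ u in α..1, quantile P u L =
      (1 - α) * quantile P α L + ∫ ω, max (L ω - quantile P α L) 0 ∂P := by
  set q := quantile P α L with hq
  set G : ℝ → ℝ := fun u => quantile P u L with hG
  -- monotonicity on Ioo α 1
  have hmono : MonotoneOn G (Set.Ioo α 1) := by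
    intro u hu v hv huv
    exact quantile_mono_of P L hLm (lt_trans hα0 hu.1) huv hv.2
  have hGae : AEMeasurable (fun u => G u - q) (volume.restrict (Set.Ioo α 1)) :=
    (aemeasurable_restrict_of_monotoneOn measurableSet_Ioo hmono).sub aemeasurable_const
  -- nonnegativity
  have hqle : ∀ u ∈ Set.Ioo α 1, q ≤ G u := fun u hu =>
    quantile_mono_of P L hLm hα0 hu.1.le hu.2
  have hnn : 0 ≤ᵐ[volume.restrict (Set.Ioo α 1)] fun u => G u - q := by
    filter_upwards [ae_restrict_mem measurableSet_Ioo] with u hu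
    exact sub_nonneg.2 (hqle u hu)
  have hnn2 : 0 ≤ᵐ[P] fun ω => max (L ω - q) 0 :=
    Filter.Eventually.of_forall fun ω => le_max_right _ _
  have hm2 : AEMeasurable (fun ω => max (L ω - q) 0) P :=
    ((hLm.sub measurable_const).max measurable_const).aemeasurable
  -- layer cake on both sides
  have key1 := lintegral_eq_lintegral_meas_lt (volume.restrict (Set.Ioo α 1)) hnn hGae
  have key2 := lintegral_eq_lintegral_meas_lt P hnn2 hm2
  -- the layer-cake integrands agree
  have hFq : ENNReal.ofReal α ≤ P {ω | L ω ≤ q} := quantile_mem P L hLm hα0 hα1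
  have hintegrand : ∀ t ∈ Set.Ioi (0:ℝ),
      (volume.restrict (Set.Ioo α 1)) {u | t < G u - q} = P {ω | t < max (L ω - q) 0} := by
    intro t ht
    simp only [Set.mem_Ioi] at ht
    set c := (P {ω | L ω ≤ q + t}).toReal with hc
    have hFfin : P {ω | L ω ≤ q + t} ≠ ∞ := measure_ne_top P _
    have hcα : α ≤ c := by
      have h1 : ENNReal.ofReal α ≤ P {ω | L ω ≤ q + t} :=
        le_trans hFq (measure_mono fun ω hω => by
          simp only [Set.mem_setOf_eq] at hω ⊢; linarith)
      have := ENNReal.toReal_mono hFfin h1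
      rwa [ENNReal.toReal_ofReal hα0.le] at this
    -- LHS set
    have hset : {u | t < G u - q} ∩ Set.Ioo α 1 = Set.Ioo c 1 := by
      ext u
      simp only [Set.mem_inter_iff, Set.mem_setOf_eq, Set.mem_Ioo]
      constructor
      · rintro ⟨h1, h2, h3⟩
        refine ⟨?_, h3⟩
        have hnle : ¬ G u ≤ q + t := by intro h; linarith
        rw [quantile_le_iff P L hLm (lt_trans hα0 h2) h3] at hnle
        push_neg at hnle
        have := (ENNReal.lt_ofReal_iff_toReal_lt hFfin).1 hnle
        exact this
      · rintro ⟨h1, h2⟩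
        have hαu : α < u := lt_of_le_of_lt hcα h1
        refine ⟨?_, hαu, h2⟩
        have hnle : ¬ (ENNReal.ofReal u ≤ P {ω | L ω ≤ q + t}) := by
          rw [not_le]
          exact (ENNReal.lt_ofReal_iff_toReal_lt hFfin).2 h1
        rw [← quantile_le_iff P L hLm (lt_trans hα0 hαu) h2] at hnle
        push_neg at hnle
        linarith
    -- RHS set
    have hset2 : {ω | t < max (L ω - q) 0} = {ω | L ω ≤ q + t}ᶜ := by
      ext ω
      simp only [Set.mem_setOf_eq, Set.mem_compl_iff, not_le]
      constructor
      · intro h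
        rcases le_or_gt (L ω - q) 0 with h' | h'
        · rw [max_eq_right h'] at h; linarith
        · rw [max_eq_left h'.le] at h; linarith
      · intro h
        rw [max_eq_left (by linarith)]; linarith
    rw [Measure.restrict_apply' measurableSet_Ioo, hset, hset2,
      measure_compl (s := {ω | L ω ≤ q + t}) (hLm measurableSet_Iic) hFfin,
      measure_univ, Real.volume_Ioo,
      ENNReal.ofReal_sub 1 ENNReal.toReal_nonneg, ENNReal.ofReal_one,
      ENNReal.ofReal_toReal hFfin]
  have keyeq : ∫⁻ u in Set.Ioo α 1, ENNReal.ofReal (G u - q) =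
      ∫⁻ ω, ENNReal.ofReal (max (L ω - q) 0) ∂P := by
    rw [key1, key2]
    exact setLIntegral_congr_fun measurableSet_Ioi hintegrand
  -- finiteness
  have hint2 : Integrable (fun ω => max (L ω - q) 0) P :=
    (hL.sub (integrable_const q)).pos_part
  have hfin2 : ∫⁻ ω, ENNReal.ofReal (max (L ω - q) 0) ∂P < ∞ :=
    (hasFiniteIntegral_iff_ofReal hnn2).1 hint2.hasFiniteIntegral
  have hint1 : Integrable (fun u => G u - q) (volume.restrict (Set.Ioo α 1)) :=
    ⟨hGae.aestronglyMeasurable, (hasFiniteIntegral_iff_ofReal hnn).2 (keyeq ▸ hfin2)⟩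
  -- Bochner equality
  have hbo : ∫ u in Set.Ioo α 1, (G u - q) = ∫ ω, max (L ω - q) 0 ∂P := by
    rw [integral_eq_lintegral_of_nonneg_ae hnn hGae.aestronglyMeasurable,
      integral_eq_lintegral_of_nonneg_ae hnn2 hm2.aestronglyMeasurable, keyeq]
  -- assemble
  have hvol : (volume (Set.Ioo α 1)).toReal = 1 - α := by
    rw [Real.volume_Ioo, ENNReal.toReal_ofReal (by linarith)]
  calc ∫ u in α..1, G u = ∫ u in Set.Ioc α 1, G u := intervalIntegral.integral_of_le hα1.le
    _ = ∫ u in Set.Ioo α 1, G u := (setIntegral_congr_set Ioo_ae_eq_Ioc).symm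
    _ = ∫ u in Set.Ioo α 1, ((G u - q) + q) := by simp
    _ = (∫ u in Set.Ioo α 1, (G u - q)) + ∫ _u in Set.Ioo α 1, q :=
        integral_add hint1 (integrable_const q)
    _ = (1 - α) * q + ∫ ω, max (L ω - q) 0 ∂P := by
        rw [hbo, setIntegral_const, measureReal_def, hvol, smul_eq_mul]; ring

lemma mul_g_integrable (hLm : Measurable L) (hL : Integrable L P)
    {g : Ω → ℝ} (hgm : Measurable g) (hg0 : ∀ ω, 0 ≤ g ω) (hg1 : ∀ ω, g ω ≤ 1) :
    Integrable (fun ω => L ω * g ω) P := by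
  refine Integrable.mono' hL.abs ((hLm.mul hgm).aestronglyMeasurable)
    (Filter.Eventually.of_forall fun ω => ?_)
  rw [Real.norm_eq_abs, abs_mul]
  calc |L ω| * |g ω| ≤ |L ω| * 1 := by
        apply mul_le_mul_of_nonneg_left _ (abs_nonneg _)
        rw [abs_of_nonneg (hg0 ω)]; exact hg1 ω
    _ = |L ω| := mul_one _

lemma g_integrable {g : Ω → ℝ} (hgm : Measurable g) (hg0 : ∀ ω, 0 ≤ g ω)
    (hg1 : ∀ ω, g ω ≤ 1) : Integrable g P := by
  refine Integrable.mono' (integrable_const 1) hgm.aestronglyMeasurable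
    (Filter.Eventually.of_forall fun ω => ?_)
  rw [Real.norm_eq_abs, abs_of_nonneg (hg0 ω)]; exact hg1 ω

lemma expectation_mul_le (hLm : Measurable L) (hL : Integrable L P)
    {α : ℝ} (hα0 : 0 < α) (hα1 : α < 1)
    {g : Ω → ℝ} (hgm : Measurable g) (hg0 : ∀ ω, 0 ≤ g ω) (hg1 : ∀ ω, g ω ≤ 1)
    (hgint : ∫ ω, g ω ∂P = 1 - α) :
    ∫ ω, L ω * g ω ∂P ≤ ∫ u in α..1, quantile P u L := by
  rw [acerbi P L hLm hL hα0 hα1]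
  set q := quantile P α L with hq
  have hgI : Integrable g P := g_integrable P hgm hg0 hg1
  have hmaxI : Integrable (fun ω => max (L ω - q) 0) P :=
    (hL.sub (integrable_const q)).pos_part
  have hLgI : Integrable (fun ω => L ω * g ω) P := mul_g_integrable P L hLm hL hgm hg0 hg1
  have hpt : ∀ ω, L ω * g ω ≤ q * g ω + max (L ω - q) 0 := by
    intro ω
    rcases le_or_gt (L ω) q with h | h
    · have h1 : (L ω - q) * g ω ≤ 0 := mul_nonpos_of_nonpos_of_nonneg (by linarith) (hg0 ω)
      have h2 : (0:ℝ) ≤ max (L ω - q) 0 := le_max_right _ _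
      nlinarith
    · have h1 : (L ω - q) * g ω ≤ (L ω - q) * 1 :=
        mul_le_mul_of_nonneg_left (hg1 ω) (by linarith)
      have h2 : max (L ω - q) 0 = L ω - q := max_eq_left (by linarith)
      nlinarith
  calc ∫ ω, L ω * g ω ∂P ≤ ∫ ω, (q * g ω + max (L ω - q) 0) ∂P :=
        integral_mono hLgI ((hgI.const_mul q).add hmaxI) hpt
    _ = q * (1 - α) + ∫ ω, max (L ω - q) 0 ∂P := by
        rw [integral_add (hgI.const_mul q) hmaxI, integral_const_mul, hgint]
    _ = (1 - α) * q + ∫ ω, max (L ω - q) 0 ∂P := by rw [mul_comm]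

lemma exists_opt_g (hLm : Measurable L) {α : ℝ} (hα0 : 0 < α) (hα1 : α < 1) :
    ∃ g : Ω → ℝ, Measurable g ∧ (∀ ω, 0 ≤ g ω) ∧ (∀ ω, g ω ≤ 1) ∧
      (∫ ω, g ω ∂P = 1 - α) ∧
      (∀ ω, L ω * g ω = quantile P α L * g ω + max (L ω - quantile P α L) 0) := by
  set q := quantile P α L with hq
  set A : Set Ω := {ω | q < L ω} with hA
  set B : Set Ω := {ω | L ω = q} with hB
  have hAm : MeasurableSet A := hLm measurableSet_Ioi
  have hBm : MeasurableSet B := hLm (measurableSet_singleton q)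
  set β : ℝ≥0∞ := ENNReal.ofReal (1 - α) with hβ
  have hβeq : β = 1 - ENNReal.ofReal α := by
    rw [hβ, ENNReal.ofReal_sub 1 hα0.le, ENNReal.ofReal_one]
  have hβfin : β ≠ ∞ := ENNReal.ofReal_ne_top
  have hPAfin : P A ≠ ∞ := measure_ne_top P _
  have hPBfin : P B ≠ ∞ := measure_ne_top P _
  have hPA : P A ≤ β := by
    have h1 : A = {ω | L ω ≤ q}ᶜ := by
      ext ω; simp only [hA, Set.mem_setOf_eq, Set.mem_compl_iff, not_le]
    rw [h1, measure_compl (s := {ω | L ω ≤ q}) (hLm measurableSet_Iic) (measure_ne_top P _), measure_univ, hβeq]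
    exact tsub_le_tsub_left (quantile_mem P L hLm hα0 hα1) 1
  have hβle : β ≤ P A + P B := by
    have hdisj : Disjoint A B := by
      rw [Set.disjoint_left]
      intro ω hωA hωB
      simp only [hA, Set.mem_setOf_eq] at hωA
      simp only [hB, Set.mem_setOf_eq] at hωB
      linarith
    have hU : A ∪ B = {ω | L ω < q}ᶜ := by
      ext ω
      simp only [hA, hB, Set.mem_union, Set.mem_setOf_eq, Set.mem_compl_iff, not_lt]
      constructor
      · rintro (h | h) <;> linarith
      · intro h
        rcases eq_or_lt_of_le h with h' | h'
        · exact Or.inr h'.symm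
        · exact Or.inl h'
    rw [← measure_union hdisj hBm, hU,
      measure_compl (s := {ω | L ω < q}) (hLm measurableSet_Iio) (measure_ne_top P _),
      measure_univ, hβeq]
    exact tsub_le_tsub_left (measure_lt_quantile_le P L hLm hα0) 1
  set c : ℝ := if P B = 0 then 0 else (β - P A).toReal / (P B).toReal with hc
  have hc0 : 0 ≤ c := by
    rw [hc]; split_ifs
    · rfl
    · positivity
  have hc1 : c ≤ 1 := by
    rw [hc]; split_ifs with hPB0
    · norm_num
    · rw [div_le_one (ENNReal.toReal_pos hPB0 hPBfin)]
      apply ENNReal.toReal_mono hPBfin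
      rw [tsub_le_iff_right]
      rwa [add_comm]
  refine ⟨fun ω => if q < L ω then 1 else if L ω = q then c else 0, ?_, ?_, ?_, ?_, ?_⟩
  · apply Measurable.ite (hLm measurableSet_Ioi) measurable_const
    exact Measurable.ite (hLm (measurableSet_singleton q)) measurable_const measurable_const
  · intro ω; dsimp only; split_ifs <;> [norm_num; exact hc0; rfl]
  · intro ω; dsimp only; split_ifs <;> [norm_num; exact hc1; norm_num]
  · have hfe : (fun ω => if q < L ω then 1 else if L ω = q then c else 0) =
        fun ω => A.indicator (fun _ => (1:ℝ)) ω + B.indicator (fun _ => c) ω := by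
      funext ω
      simp only [Set.indicator_apply, hA, hB, Set.mem_setOf_eq]
      split_ifs with h1 h2 <;> try ring
      · exfalso; rw [h2] at h1; exact lt_irrefl q h1
    rw [hfe, integral_add ((integrable_const 1).indicator hAm)
      ((integrable_const c).indicator hBm),
      integral_indicator_const _ hAm, integral_indicator_const _ hBm,
      smul_eq_mul, smul_eq_mul, mul_one]
    rcases eq_or_ne (P B) 0 with hPB0 | hPB0
    · have hcz : c = 0 := by rw [hc, if_pos hPB0]
      have hPAeq : P A = β := by
        apply le_antisymm hPA
        calc β ≤ P A + P B := hβle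
          _ = P A := by rw [hPB0, add_zero]
      rw [hcz, measureReal_def, measureReal_def, hPAeq, mul_zero, add_zero, hβ, ENNReal.toReal_ofReal (by linarith)]
    · have hcc : c = (β - P A).toReal / (P B).toReal := by rw [hc, if_neg hPB0]
      rw [hcc, measureReal_def, measureReal_def, mul_comm ((P B).toReal), div_mul_cancel₀ _ (ENNReal.toReal_ne_zero.2 ⟨hPB0, hPBfin⟩)]
      rw [← ENNReal.toReal_add hPAfin (by simp [hβfin] : β - P A ≠ ∞)]
      rw [add_comm (P A), tsub_add_cancel_of_le hPA, hβ,
        ENNReal.toReal_ofReal (by linarith)]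
  · intro ω; dsimp only
    split_ifs with h1 h2
    · rw [mul_one, mul_one, max_eq_left (by linarith)]; ring
    · rw [h2, max_eq_right (by linarith)]; ring
    · push_neg at h1
      rw [mul_zero, mul_zero, max_eq_right (by linarith [lt_of_le_of_ne h1 h2])]; ring

end aux

noncomputable def ES {Ω : Type*} [MeasurableSpace Ω] (P : Measure Ω) (α : ℝ) (L : Ω → ℝ) : ℝ :=
  (1 - α)⁻¹ * ∫ u in α..1, quantile P u L

theorem ES_subadditive {Ω : Type*} [MeasurableSpace Ω] (P : Measure Ω)
    [IsProbabilityMeasure P] (L₁ L₂ : Ω → ℝ) (hL₁m : Measurable L₁) (hL₂m : Measurable L₂)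
    (hL₁ : Integrable L₁ P) (hL₂ : Integrable L₂ P)
    (α : ℝ) (hα0 : 0 < α) (hα1 : α < 1) :
    ES P α (fun ω => L₁ ω + L₂ ω) ≤ ES P α L₁ + ES P α L₂ := by
  set L : Ω → ℝ := fun ω => L₁ ω + L₂ ω with hLdef
  have hLm : Measurable L := hL₁m.add hL₂m
  have hLI : Integrable L P := hL₁.add hL₂
  obtain ⟨g, hgm, hg0, hg1, hgint, hgopt⟩ := exists_opt_g P L hLm hα0 hα1
  have hkey : ∫ u in α..1, quantile P u L = ∫ ω, L ω * g ω ∂P := by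
    rw [acerbi P L hLm hLI hα0 hα1]
    have hfe : (fun ω => L ω * g ω) =
        fun ω => quantile P α L * g ω + max (L ω - quantile P α L) 0 := funext hgopt
    have hmaxI : Integrable (fun ω => max (L ω - quantile P α L) 0) P :=
      (hLI.sub (integrable_const _)).pos_part
    rw [hfe, integral_add ((g_integrable P hgm hg0 hg1).const_mul _) hmaxI,
      integral_const_mul, hgint, mul_comm]
  have hsplit : ∫ ω, L ω * g ω ∂P = (∫ ω, L₁ ω * g ω ∂P) + ∫ ω, L₂ ω * g ω ∂P := by
    have hfe : (fun ω => L ω * g ω) = fun ω => L₁ ω * g ω + L₂ ω * g ω := by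
      funext ω; rw [hLdef]; ring
    rw [hfe, integral_add (mul_g_integrable P L₁ hL₁m hL₁ hgm hg0 hg1)
      (mul_g_integrable P L₂ hL₂m hL₂ hgm hg0 hg1)]
  have h1 := expectation_mul_le P L₁ hL₁m hL₁ hα0 hα1 hgm hg0 hg1 hgint
  have h2 := expectation_mul_le P L₂ hL₂m hL₂ hα0 hα1 hgm hg0 hg1 hgint
  have hmain : ∫ u in α..1, quantile P u L ≤
      (∫ u in α..1, quantile P u L₁) + ∫ u in α..1, quantile P u L₂ := by
    rw [hkey, hsplit]; exact add_le_add h1 h2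
  have hinv : (0:ℝ) ≤ (1 - α)⁻¹ := inv_nonneg.2 (by linarith)
  calc ES P α L = (1 - α)⁻¹ * ∫ u in α..1, quantile P u L := rfl
    _ ≤ (1 - α)⁻¹ * ((∫ u in α..1, quantile P u L₁) + ∫ u in α..1, quantile P u L₂) :=
        mul_le_mul_of_nonneg_left hmain hinv
    _ = ES P α L₁ + ES P α L₂ := by rw [ES, ES]; ring
end

section
/- The α-quantile is elicited by the weighted absolute error: for a random variable L with finite mean whose distribution function is continuous and strictly increasing, and 0 < α < 1, the function x ↦ E[(1_{x ≥ L} − α)(x − L)] attains its minimum over ℝ exactly at x = q_α(L). -/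
open MeasureTheory

private lemma key_id (α a b ℓ : ℝ) :
    ((if ℓ ≤ b then (1:ℝ) else 0) - α) * (b - ℓ)
      = ((if ℓ ≤ a then (1:ℝ) else 0) - α) * (a - ℓ)
      + ((if ℓ ≤ a then (1:ℝ) else 0) - α) * (b - a)
      + (if a < ℓ ∧ ℓ ≤ b then (1:ℝ) else 0) * (b - ℓ)
      + (if b < ℓ ∧ ℓ ≤ a then (1:ℝ) else 0) * (ℓ - b) := by
  rcases le_or_gt ℓ a with h1 | h1 <;> rcases le_or_gt ℓ b with h2 | h2
  · rw [if_pos h1, if_pos h2, if_neg (fun h => absurd h.1 (not_lt.2 h1)),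
      if_neg (fun h => absurd h.1 (not_lt.2 h2))]; ring
  · rw [if_pos h1, if_neg (not_le.2 h2), if_neg (fun h => absurd h.1 (not_lt.2 h1)),
      if_pos (And.intro h2 h1)]; ring
  · rw [if_neg (not_le.2 h1), if_pos h2, if_pos (And.intro h1 h2),
      if_neg (fun h => absurd h.2 (not_le.2 h1))]; ring
  · rw [if_neg (not_le.2 h1), if_neg (not_le.2 h2), if_neg (fun h => absurd h.2 (not_le.2 h2)),
      if_neg (fun h => absurd h.2 (not_le.2 h1))]; ring

open Filter Set Topology in
private lemma F_quantile {Ω : Type*} [MeasurableSpace Ω]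
    (P : Measure Ω) [IsProbabilityMeasure P] (L : Ω → ℝ) (hLm : Measurable L)
    (hcont : Continuous fun x : ℝ => (P {ω | L ω ≤ x}).toReal)
    (hmono : StrictMono fun x : ℝ => (P {ω | L ω ≤ x}).toReal)
    (α : ℝ) (hα0 : 0 < α) (hα1 : α < 1) :
    (P {ω | L ω ≤ quantile P α L}).toReal = α := by
  set F : ℝ → ℝ := fun x : ℝ => (P {ω | L ω ≤ x}).toReal with hF
  -- F tends to 1 along ℕ at top
  have htop : Tendsto (fun n : ℕ => F (n : ℝ)) atTop (𝓝 1) := by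
    have hU : (⋃ n : ℕ, {ω | L ω ≤ (n : ℝ)}) = univ := by
      ext ω; simp only [mem_iUnion, mem_setOf_eq, mem_univ, iff_true]
      exact exists_nat_ge (L ω)
    have h1 : Tendsto (fun n : ℕ => P {ω | L ω ≤ (n : ℝ)}) atTop (𝓝 1) := by
      have := tendsto_measure_iUnion_atTop (μ := P)
        (s := fun n : ℕ => {ω | L ω ≤ (n : ℝ)})
        (fun m n hmn ω hω => by
          simp only [Set.mem_setOf_eq] at *
          have : (m : ℝ) ≤ n := by exact_mod_cast hmn
          linarith)
      rwa [hU, measure_univ] at this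
    have := (ENNReal.tendsto_toReal (a := 1) (by norm_num)).comp h1
    exact this
  have hbot : Tendsto (fun n : ℕ => F (-(n : ℝ))) atTop (𝓝 0) := by
    have hI : (⋂ n : ℕ, {ω | L ω ≤ -(n : ℝ)}) = (∅ : Set Ω) := by
      ext ω; simp only [mem_iInter, mem_setOf_eq, mem_empty_iff_false, iff_false, not_forall,
        not_le]
      obtain ⟨n, hn⟩ := exists_nat_gt (-L ω)
      exact ⟨n, by linarith⟩
    have h1 : Tendsto (fun n : ℕ => P {ω | L ω ≤ -(n : ℝ)}) atTop (𝓝 0) := by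
      have := tendsto_measure_iInter_atTop (μ := P)
        (s := fun n : ℕ => {ω | L ω ≤ -(n : ℝ)})
        (fun n => (hLm measurableSet_Iic).nullMeasurableSet)
        (fun m n hmn ω hω => by
          simp only [Set.mem_setOf_eq] at *
          have : (m : ℝ) ≤ n := by exact_mod_cast hmn
          linarith)
        ⟨0, measure_ne_top P _⟩
      rwa [hI, measure_empty] at this
    have := (ENNReal.tendsto_toReal (a := 0) (by norm_num)).comp h1
    exact this
  obtain ⟨b, hb⟩ := (htop.eventually (eventually_gt_nhds hα1)).exists
  obtain ⟨a, ha⟩ := (hbot.eventually (eventually_lt_nhds hα0)).exists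
  have hab : (-(a : ℝ)) < (b : ℝ) := hmono.lt_iff_lt.1 (lt_trans ha hb)
  obtain ⟨q0, _, hq0⟩ := intermediate_value_Icc hab.le hcont.continuousOn ⟨ha.le, hb.le⟩
  -- identify the quantile set
  have hset : {ℓ : ℝ | ENNReal.ofReal α ≤ P {ω | L ω ≤ ℓ}} = Ici q0 := by
    ext ℓ
    simp only [mem_setOf_eq, mem_Ici]
    rw [ENNReal.ofReal_le_iff_le_toReal (measure_ne_top P _), ← hq0]
    exact ⟨fun h => hmono.le_iff_le.1 h, fun h => hmono.monotone h⟩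
  have : quantile P α L = q0 := by
    unfold quantile; rw [hset, csInf_Ici]
  rw [this]; exact hq0

theorem quantile_elicited_by_weighted_absolute_error {Ω : Type*} [MeasurableSpace Ω]
    (P : Measure Ω) [IsProbabilityMeasure P] (L : Ω → ℝ) (hLm : Measurable L)
    (hL : Integrable L P)
    (hcont : Continuous fun x : ℝ => (P {ω | L ω ≤ x}).toReal)
    (hmono : StrictMono fun x : ℝ => (P {ω | L ω ≤ x}).toReal)
    (α : ℝ) (hα0 : 0 < α) (hα1 : α < 1) :
    ∀ x : ℝ, x ≠ quantile P α L →
      (∫ ω, ((if L ω ≤ quantile P α L then (1 : ℝ) else 0) - α) * (quantile P α L - L ω) ∂P)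
        < ∫ ω, ((if L ω ≤ x then (1 : ℝ) else 0) - α) * (x - L ω) ∂P := by
  intro x hx
  set q : ℝ := quantile P α L with hq
  have hFq : (P {ω | L ω ≤ q}).toReal = α := F_quantile P L hLm hcont hmono α hα0 hα1
  have mble : ∀ c : ℝ, MeasurableSet {ω | L ω ≤ c} := fun c => hLm measurableSet_Iic
  have mbleIoc : ∀ u v : ℝ, MeasurableSet {ω | u < L ω ∧ L ω ≤ v} := fun u v => by
    have : {ω | u < L ω ∧ L ω ≤ v} = L ⁻¹' (Set.Ioc u v) := rfl
    rw [this]; exact hLm measurableSet_Ioc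
  -- integrability of the scoring functions
  have hint : ∀ c : ℝ, Integrable (fun ω => ((if L ω ≤ c then (1:ℝ) else 0) - α) * (c - L ω)) P := by
    intro c
    apply Integrable.bdd_mul (c := 1) ((integrable_const c).sub hL)
    · exact ((Measurable.ite (mble c) measurable_const measurable_const).sub
        measurable_const).aestronglyMeasurable
    · refine Filter.Eventually.of_forall fun ω => ?_
      rw [Real.norm_eq_abs, abs_le]
      constructor <;> split_ifs <;> linarith
  -- indicator integrals and integrability
  have hindint : ∀ c : ℝ, Integrable (fun ω => if L ω ≤ c then (1:ℝ) else 0) P := by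
    intro c
    have := (integrable_const (μ := P) (1:ℝ)).indicator (mble c)
    rw [show (fun ω => if L ω ≤ c then (1:ℝ) else 0) = Set.indicator {ω | L ω ≤ c} (fun _ => (1:ℝ))
      from by funext ω; by_cases hω : L ω ≤ c <;> simp [Set.indicator_apply, hω]]
    exact this
  have hind : ∀ c : ℝ, ∫ ω, (if L ω ≤ c then (1:ℝ) else 0) ∂P = (P {ω | L ω ≤ c}).toReal := by
    intro c
    have heq : (fun ω => if L ω ≤ c then (1:ℝ) else 0)
        = Set.indicator {ω | L ω ≤ c} (fun _ => (1:ℝ)) := by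
      funext ω
      by_cases hω : L ω ≤ c <;> simp [Set.indicator_apply, hω]
    rw [heq, integral_indicator_const (1:ℝ) (mble c)]
    simp
    rfl
  have hIocInt : ∀ u v : ℝ, Integrable (fun ω => if u < L ω ∧ L ω ≤ v then (1:ℝ) else 0) P := by
    intro u v
    have heq : (fun ω => if u < L ω ∧ L ω ≤ v then (1:ℝ) else 0)
        = Set.indicator {ω | u < L ω ∧ L ω ≤ v} (fun _ => (1:ℝ)) := by
      funext ω
      by_cases hω : u < L ω ∧ L ω ≤ v <;> simp [Set.indicator_apply, hω]
    rw [heq]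
    exact (integrable_const (μ := P) (1:ℝ)).indicator (mbleIoc u v)
  have hIocVal : ∀ u v : ℝ, ∫ ω, (if u < L ω ∧ L ω ≤ v then (1:ℝ) else 0) ∂P
      = (P {ω | u < L ω ∧ L ω ≤ v}).toReal := by
    intro u v
    have heq : (fun ω => if u < L ω ∧ L ω ≤ v then (1:ℝ) else 0)
        = Set.indicator {ω | u < L ω ∧ L ω ≤ v} (fun _ => (1:ℝ)) := by
      funext ω
      by_cases hω : u < L ω ∧ L ω ≤ v <;> simp [Set.indicator_apply, hω]
    rw [heq, integral_indicator_const (1:ℝ) (mbleIoc u v)]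
    simp
    rfl
  have hIocMul : ∀ u v : ℝ,
      Integrable (fun ω => (if u < L ω ∧ L ω ≤ v then (1:ℝ) else 0) * (v - L ω)) P := by
    intro u v
    apply Integrable.bdd_mul (c := 1) ((integrable_const v).sub hL)
    · exact (Measurable.ite (mbleIoc u v) measurable_const
        measurable_const).aestronglyMeasurable
    · exact Filter.Eventually.of_forall fun ω => by rw [Real.norm_eq_abs]; split_ifs <;> simp
  have hIocMul' : ∀ u v : ℝ,
      Integrable (fun ω => (if u < L ω ∧ L ω ≤ v then (1:ℝ) else 0) * (L ω - u)) P := by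
    intro u v
    apply Integrable.bdd_mul (c := 1) (hL.sub (integrable_const u))
    · exact (Measurable.ite (mbleIoc u v) measurable_const
        measurable_const).aestronglyMeasurable
    · exact Filter.Eventually.of_forall fun ω => by rw [Real.norm_eq_abs]; split_ifs <;> simp
  -- measure of Ioc preimages
  have hPIoc : ∀ u v : ℝ, u ≤ v → (P {ω | u < L ω ∧ L ω ≤ v}).toReal
      = (P {ω | L ω ≤ v}).toReal - (P {ω | L ω ≤ u}).toReal := by
    intro u v huv
    have hsub : {ω | L ω ≤ u} ⊆ {ω | L ω ≤ v} := fun ω hω => le_trans hω huv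
    have hdiff : {ω | u < L ω ∧ L ω ≤ v} = {ω | L ω ≤ v} \ {ω | L ω ≤ u} := by
      ext ω
      simp only [Set.mem_setOf_eq, Set.mem_diff, not_le]
      tauto
    rw [hdiff, measure_diff hsub (mble u).nullMeasurableSet (measure_ne_top P _),
      ENNReal.toReal_sub_of_le (measure_mono hsub) (measure_ne_top P _)]
  -- f1 integral is zero
  have hf1int : Integrable (fun ω => ((if L ω ≤ q then (1:ℝ) else 0) - α) * (x - q)) P :=
    ((hindint q).sub (integrable_const α)).mul_const _
  have hf1 : ∫ ω, ((if L ω ≤ q then (1:ℝ) else 0) - α) * (x - q) ∂P = 0 := by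
    rw [integral_mul_const, integral_sub (hindint q) (integrable_const α), hind q, hFq,
      integral_const]
    simp
  -- rewrite the difference
  rw [← sub_pos, ← integral_sub (hint x) (hint q)]
  have hrw : (fun ω => ((if L ω ≤ x then (1:ℝ) else 0) - α) * (x - L ω)
      - ((if L ω ≤ q then (1:ℝ) else 0) - α) * (q - L ω))
      = fun ω => ((if L ω ≤ q then (1:ℝ) else 0) - α) * (x - q)
        + ((if q < L ω ∧ L ω ≤ x then (1:ℝ) else 0) * (x - L ω)
        + (if x < L ω ∧ L ω ≤ q then (1:ℝ) else 0) * (L ω - x)) := by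
    funext ω
    have := key_id α q x (L ω)
    linarith
  have hadd : Integrable (fun ω => (if q < L ω ∧ L ω ≤ x then (1:ℝ) else 0) * (x - L ω)
      + (if x < L ω ∧ L ω ≤ q then (1:ℝ) else 0) * (L ω - x)) P :=
    (hIocMul q x).add (hIocMul' x q)
  rw [hrw, integral_add hf1int hadd, integral_add (hIocMul q x) (hIocMul' x q), hf1]
  rcases hx.lt_or_gt with hlt | hlt
  · -- x < q : the third term is strictly positive, the second nonnegative
    have h2 : 0 ≤ ∫ ω, (if q < L ω ∧ L ω ≤ x then (1:ℝ) else 0) * (x - L ω) ∂P := by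
      apply integral_nonneg
      intro ω
      dsimp only
      split_ifs with h
      · nlinarith [h.2]
      · simp
    set m : ℝ := (x + q) / 2 with hm
    have hxm : x < m := by rw [hm]; linarith
    have hmq : m < q := by rw [hm]; linarith
    have hlow : ∀ ω, (if m < L ω ∧ L ω ≤ q then (1:ℝ) else 0) * (m - x)
        ≤ (if x < L ω ∧ L ω ≤ q then (1:ℝ) else 0) * (L ω - x) := by
      intro ω
      split_ifs with hc hc2 hc3
      · rw [one_mul, one_mul]; linarith [hc.1]
      · exact absurd ⟨lt_trans hxm hc.1, hc.2⟩ hc2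
      · rw [zero_mul, one_mul]; linarith [hc3.1]
      · simp
    have h3 : (0:ℝ) < ((P {ω | L ω ≤ q}).toReal - (P {ω | L ω ≤ m}).toReal) * (m - x) := by
      apply mul_pos _ (by linarith)
      have := hmono hmq
      simpa using sub_pos.2 this
    calc (0:ℝ) < ((P {ω | L ω ≤ q}).toReal - (P {ω | L ω ≤ m}).toReal) * (m - x) := h3
      _ = ∫ ω, (if m < L ω ∧ L ω ≤ q then (1:ℝ) else 0) * (m - x) ∂P := by
          rw [integral_mul_const, hIocVal, hPIoc m q hmq.le]
      _ ≤ ∫ ω, (if x < L ω ∧ L ω ≤ q then (1:ℝ) else 0) * (L ω - x) ∂P :=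
          integral_mono ((hIocInt m q).mul_const _) (hIocMul' x q) hlow
      _ ≤ 0 + (∫ ω, (if q < L ω ∧ L ω ≤ x then (1:ℝ) else 0) * (x - L ω) ∂P
          + ∫ ω, (if x < L ω ∧ L ω ≤ q then (1:ℝ) else 0) * (L ω - x) ∂P) := by linarith
  · -- q < x : the second term is strictly positive, the third nonnegative
    have h3 : 0 ≤ ∫ ω, (if x < L ω ∧ L ω ≤ q then (1:ℝ) else 0) * (L ω - x) ∂P := by
      apply integral_nonneg
      intro ω
      dsimp only
      split_ifs with h
      · nlinarith [h.1]
      · simp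
    set m : ℝ := (q + x) / 2 with hm
    have hqm : q < m := by rw [hm]; linarith
    have hmx : m < x := by rw [hm]; linarith
    have hlow : ∀ ω, (if q < L ω ∧ L ω ≤ m then (1:ℝ) else 0) * (x - m)
        ≤ (if q < L ω ∧ L ω ≤ x then (1:ℝ) else 0) * (x - L ω) := by
      intro ω
      split_ifs with hc hc2 hc3
      · rw [one_mul, one_mul]; linarith [hc.2]
      · exact absurd ⟨hc.1, le_trans hc.2 hmx.le⟩ hc2
      · rw [zero_mul, one_mul]; linarith [hc3.2]
      · simp
    have h2 : (0:ℝ) < ((P {ω | L ω ≤ m}).toReal - (P {ω | L ω ≤ q}).toReal) * (x - m) := by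
      apply mul_pos _ (by linarith)
      have := hmono hqm
      simpa using sub_pos.2 this
    calc (0:ℝ) < ((P {ω | L ω ≤ m}).toReal - (P {ω | L ω ≤ q}).toReal) * (x - m) := h2
      _ = ∫ ω, (if q < L ω ∧ L ω ≤ m then (1:ℝ) else 0) * (x - m) ∂P := by
          rw [integral_mul_const, hIocVal, hPIoc q m hqm.le]
      _ ≤ ∫ ω, (if q < L ω ∧ L ω ≤ x then (1:ℝ) else 0) * (x - L ω) ∂P :=
          integral_mono ((hIocInt q m).mul_const _) (hIocMul q x) hlow
      _ ≤ 0 + (∫ ω, (if q < L ω ∧ L ω ≤ x then (1:ℝ) else 0) * (x - L ω) ∂P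
          + ∫ ω, (if x < L ω ∧ L ω ≤ q then (1:ℝ) else 0) * (L ω - x) ∂P) := by linarith
end

section
/- If 1/2 ≤ τ < 1 and L₁, L₂ are integrable random variables on a common probability space with L₂ = a·L₁ + b almost surely for some a > 0 and b ∈ ℝ (i.e., corr(L₁, L₂) = 1), then the τ-expectile is additive: e_τ(L₁ + L₂) = e_τ(L₁) + e_τ(L₂). -/
open MeasureTheory

lemma pt_ineq (τ p q x : ℝ) (hτ0 : 1 / 2 ≤ τ) (hτ1 : τ < 1) (hpq : p ≤ q) :
    τ * max (x - q) 0 - (1 - τ) * max (q - x) 0 + (1 - τ) * (q - p)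
      ≤ τ * max (x - p) 0 - (1 - τ) * max (p - x) 0 := by
  rcases le_total x p with h1 | h1 <;> rcases le_total x q with h2 | h2
  · rw [max_eq_right (by linarith : x - p ≤ 0), max_eq_left (by linarith : 0 ≤ p - x),
      max_eq_right (by linarith : x - q ≤ 0), max_eq_left (by linarith : 0 ≤ q - x)]
    nlinarith
  · rw [max_eq_right (by linarith : x - p ≤ 0), max_eq_left (by linarith : 0 ≤ p - x),
      max_eq_left (by linarith : 0 ≤ x - q), max_eq_right (by linarith : q - x ≤ 0)]
    nlinarith
  · rw [max_eq_left (by linarith : 0 ≤ x - p), max_eq_right (by linarith : p - x ≤ 0),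
      max_eq_right (by linarith : x - q ≤ 0), max_eq_left (by linarith : 0 ≤ q - x)]
    nlinarith
  · rw [max_eq_left (by linarith : 0 ≤ x - p), max_eq_right (by linarith : p - x ≤ 0),
      max_eq_left (by linarith : 0 ≤ x - q), max_eq_right (by linarith : q - x ≤ 0)]
    nlinarith

lemma expectile_unique {Ω : Type*} [MeasurableSpace Ω] (P : Measure Ω)
    [IsProbabilityMeasure P] (L : Ω → ℝ) (hL : Integrable L P)
    (τ : ℝ) (hτ0 : 1 / 2 ≤ τ) (hτ1 : τ < 1) (u v : ℝ)
    (hu : τ * ∫ ω, max (L ω - u) 0 ∂P = (1 - τ) * ∫ ω, max (u - L ω) 0 ∂P)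
    (hv : τ * ∫ ω, max (L ω - v) 0 ∂P = (1 - τ) * ∫ ω, max (v - L ω) 0 ∂P) : u = v := by
  have main : ∀ p q : ℝ, p < q →
      τ * ∫ ω, max (L ω - p) 0 ∂P = (1 - τ) * ∫ ω, max (p - L ω) 0 ∂P →
      τ * ∫ ω, max (L ω - q) 0 ∂P = (1 - τ) * ∫ ω, max (q - L ω) 0 ∂P → False := by
    intro p q hpq hp hq
    have iAp : Integrable (fun ω => max (L ω - p) 0) P :=
      (hL.sub (integrable_const p)).pos_part
    have iBp : Integrable (fun ω => max (p - L ω) 0) P :=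
      ((integrable_const p).sub hL).pos_part
    have iAq : Integrable (fun ω => max (L ω - q) 0) P :=
      (hL.sub (integrable_const q)).pos_part
    have iBq : Integrable (fun ω => max (q - L ω) 0) P :=
      ((integrable_const q).sub hL).pos_part
    have hmono : ∫ ω, (τ * max (L ω - q) 0 - (1 - τ) * max (q - L ω) 0
          + (1 - τ) * (q - p)) ∂P
        ≤ ∫ ω, (τ * max (L ω - p) 0 - (1 - τ) * max (p - L ω) 0) ∂P := by
      refine integral_mono ?_ ?_ ?_
      · exact (((iAq.const_mul τ).sub (iBq.const_mul (1 - τ))).add (integrable_const _))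
      · exact ((iAp.const_mul τ).sub (iBp.const_mul (1 - τ)))
      · intro ω
        exact pt_ineq τ p q (L ω) hτ0 hτ1 hpq.le
    have iCq : Integrable (fun ω => τ * max (L ω - q) 0 - (1 - τ) * max (q - L ω) 0) P :=
      (iAq.const_mul τ).sub (iBq.const_mul (1 - τ))
    rw [integral_add iCq (integrable_const _),
      integral_sub (iAq.const_mul τ) (iBq.const_mul (1 - τ)),
      integral_sub (iAp.const_mul τ) (iBp.const_mul (1 - τ)),
      integral_const_mul, integral_const_mul, integral_const_mul, integral_const_mul, integral_const_mul,
      integral_const, probReal_univ] at hmono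
    simp only [ENNReal.toReal_one, smul_eq_mul, one_mul] at hmono
    nlinarith
  rcases lt_trichotomy u v with h | h | h
  · exact absurd (main u v h hu hv) (by simp)
  · exact h
  · exact absurd (main v u h hv hu) (by simp)

lemma expectile_scaled {Ω : Type*} [MeasurableSpace Ω] (P : Measure Ω)
    [IsProbabilityMeasure P] (L : Ω → ℝ) (τ c b ℓ : ℝ) (hc : 0 < c)
    (hℓ : τ * ∫ ω, max (L ω - ℓ) 0 ∂P = (1 - τ) * ∫ ω, max (ℓ - L ω) 0 ∂P) :
    τ * ∫ ω, max ((c * L ω + b) - (c * ℓ + b)) 0 ∂P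
      = (1 - τ) * ∫ ω, max ((c * ℓ + b) - (c * L ω + b)) 0 ∂P := by
  have e1 : ∀ ω, max ((c * L ω + b) - (c * ℓ + b)) 0 = c * max (L ω - ℓ) 0 := by
    intro ω
    rw [mul_max_of_nonneg _ _ hc.le, mul_zero,
      show (c * L ω + b) - (c * ℓ + b) = c * (L ω - ℓ) by ring]
  have e2 : ∀ ω, max ((c * ℓ + b) - (c * L ω + b)) 0 = c * max (ℓ - L ω) 0 := by
    intro ω
    rw [mul_max_of_nonneg _ _ hc.le, mul_zero,
      show (c * ℓ + b) - (c * L ω + b) = c * (ℓ - L ω) by ring]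
  simp_rw [e1, e2, integral_const_mul]
  linear_combination c * hℓ

theorem expectile_additive_linear_dependence {Ω : Type*} [MeasurableSpace Ω] (P : Measure Ω)
    [IsProbabilityMeasure P] (L₁ L₂ : Ω → ℝ) (hL₁ : Integrable L₁ P) (hL₂ : Integrable L₂ P)
    (a b : ℝ) (ha : 0 < a) (hlin : ∀ᵐ ω ∂P, L₂ ω = a * L₁ ω + b)
    (τ : ℝ) (hτ0 : 1 / 2 ≤ τ) (hτ1 : τ < 1) (ℓ₁ ℓ₂ ℓ₁₂ : ℝ)
    (hℓ₁ : τ * ∫ ω, max (L₁ ω - ℓ₁) 0 ∂P = (1 - τ) * ∫ ω, max (ℓ₁ - L₁ ω) 0 ∂P)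
    (hℓ₂ : τ * ∫ ω, max (L₂ ω - ℓ₂) 0 ∂P = (1 - τ) * ∫ ω, max (ℓ₂ - L₂ ω) 0 ∂P)
    (hℓ₁₂ : τ * ∫ ω, max ((L₁ ω + L₂ ω) - ℓ₁₂) 0 ∂P
        = (1 - τ) * ∫ ω, max (ℓ₁₂ - (L₁ ω + L₂ ω)) 0 ∂P) :
    ℓ₁₂ = ℓ₁ + ℓ₂ := by
  -- ℓ₂ = a * ℓ₁ + b
  have hv2 : τ * ∫ ω, max (L₂ ω - (a * ℓ₁ + b)) 0 ∂P
      = (1 - τ) * ∫ ω, max ((a * ℓ₁ + b) - L₂ ω) 0 ∂P := by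
    have h1 : ∫ ω, max (L₂ ω - (a * ℓ₁ + b)) 0 ∂P
        = ∫ ω, max ((a * L₁ ω + b) - (a * ℓ₁ + b)) 0 ∂P :=
      integral_congr_ae (hlin.mono fun ω h => by simp only [h])
    have h2 : ∫ ω, max ((a * ℓ₁ + b) - L₂ ω) 0 ∂P
        = ∫ ω, max ((a * ℓ₁ + b) - (a * L₁ ω + b)) 0 ∂P :=
      integral_congr_ae (hlin.mono fun ω h => by simp only [h])
    rw [h1, h2]
    exact expectile_scaled P L₁ τ a b ℓ₁ ha hℓ₁
  have he2 : ℓ₂ = a * ℓ₁ + b :=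
    expectile_unique P L₂ hL₂ τ hτ0 hτ1 ℓ₂ (a * ℓ₁ + b) hℓ₂ hv2
  -- ℓ₁₂ = (1 + a) * ℓ₁ + b
  have hv12 : τ * ∫ ω, max ((L₁ ω + L₂ ω) - ((1 + a) * ℓ₁ + b)) 0 ∂P
      = (1 - τ) * ∫ ω, max (((1 + a) * ℓ₁ + b) - (L₁ ω + L₂ ω)) 0 ∂P := by
    have h1 : ∫ ω, max ((L₁ ω + L₂ ω) - ((1 + a) * ℓ₁ + b)) 0 ∂P
        = ∫ ω, max (((1 + a) * L₁ ω + b) - ((1 + a) * ℓ₁ + b)) 0 ∂P :=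
      integral_congr_ae (hlin.mono fun ω h => by simp only [h]; ring_nf)
    have h2 : ∫ ω, max (((1 + a) * ℓ₁ + b) - (L₁ ω + L₂ ω)) 0 ∂P
        = ∫ ω, max (((1 + a) * ℓ₁ + b) - ((1 + a) * L₁ ω + b)) 0 ∂P :=
      integral_congr_ae (hlin.mono fun ω h => by simp only [h]; ring_nf)
    rw [h1, h2]
    exact expectile_scaled P L₁ τ (1 + a) b ℓ₁ (by linarith) hℓ₁
  have he12 : ℓ₁₂ = (1 + a) * ℓ₁ + b :=
    expectile_unique P (fun ω => L₁ ω + L₂ ω) (hL₁.add hL₂) τ hτ0 hτ1 ℓ₁₂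
      ((1 + a) * ℓ₁ + b) hℓ₁₂ hv12
  rw [he12, he2]; ring
end

section
/- For 1/2 ≤ τ < 1, a bounded random variable L, and ℓ = e_τ(L), define φ̄ = (τ·1_{L > ℓ} + (1−τ)·1_{L ≤ ℓ}) / (τ·P[L > ℓ] + (1−τ)·P[L ≤ ℓ]). Then φ̄ ≥ 0, E[φ̄] = 1, e_τ(L) = E[φ̄·L], and for every bounded random variable L*, e_τ(L + L*) ≥ e_τ(L) + E[φ̄·L*] (i.e., φ̄ is a subgradient of e_τ at L). -/
open MeasureTheory

theorem expectile_subgradient {Ω : Type*} [MeasurableSpace Ω] (P : Measure Ω)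
    [IsProbabilityMeasure P] (L : Ω → ℝ) (hLm : Measurable L) (hLb : ∃ C, ∀ ω, |L ω| ≤ C)
    (τ : ℝ) (hτ0 : 1 / 2 ≤ τ) (hτ1 : τ < 1) (ℓ : ℝ)
    (hℓ : τ * ∫ ω, max (L ω - ℓ) 0 ∂P = (1 - τ) * ∫ ω, max (ℓ - L ω) 0 ∂P)
    (φ : Ω → ℝ)
    (hφ : ∀ ω, φ ω = (τ * (if ℓ < L ω then (1 : ℝ) else 0)
        + (1 - τ) * (if L ω ≤ ℓ then (1 : ℝ) else 0))
        / (τ * (P {ω' | ℓ < L ω'}).toReal + (1 - τ) * (P {ω' | L ω' ≤ ℓ}).toReal)) :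
    (∀ ω, 0 ≤ φ ω) ∧ (∫ ω, φ ω ∂P) = 1 ∧ ℓ = (∫ ω, φ ω * L ω ∂P) ∧
      ∀ (Lstar : Ω → ℝ), Measurable Lstar → (∃ C, ∀ ω, |Lstar ω| ≤ C) →
        ∀ ℓ' : ℝ,
          τ * ∫ ω, max ((L ω + Lstar ω) - ℓ') 0 ∂P
              = (1 - τ) * ∫ ω, max (ℓ' - (L ω + Lstar ω)) 0 ∂P →
          ℓ + ∫ ω, φ ω * Lstar ω ∂P ≤ ℓ' := by
  obtain ⟨C, hC⟩ := hLb
  -- helper: bounded measurable functions are integrable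
  have key : ∀ (f : Ω → ℝ), Measurable f → (∀ ω, |f ω| ≤ |f ω|) → ∀ c : ℝ, (∀ ω, |f ω| ≤ c) →
      Integrable f P := by
    intro f hf _ c hc
    exact (integrable_const c).mono' hf.aestronglyMeasurable
      (ae_of_all _ fun ω => by simpa [Real.norm_eq_abs] using hc ω)
  have hmaxabs : ∀ a : ℝ, |max a 0| ≤ |a| := fun a => by
    rcases le_total a 0 with h|h
    · rw [max_eq_right h]; simp
    · rw [max_eq_left h, abs_of_nonneg h]
  -- basic positivity
  have hτpos : (0:ℝ) < τ := by linarith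
  have h1τ : (0:ℝ) < 1 - τ := by linarith
  -- indicators
  set χ : Ω → ℝ := fun ω => if ℓ < L ω then (1:ℝ) else 0 with hχdef
  set ψ : Ω → ℝ := fun ω => if L ω ≤ ℓ then (1:ℝ) else 0 with hψdef
  have hχm : Measurable χ := Measurable.ite (measurableSet_lt measurable_const hLm)
    measurable_const measurable_const
  have hψm : Measurable ψ := Measurable.ite (measurableSet_le hLm measurable_const)
    measurable_const measurable_const
  have hχb : ∀ ω, |χ ω| ≤ 1 := fun ω => by simp only [hχdef]; split_ifs <;> simp
  have hψb : ∀ ω, |ψ ω| ≤ 1 := fun ω => by simp only [hψdef]; split_ifs <;> simp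
  have hχψ : ∀ ω, χ ω + ψ ω = 1 := fun ω => by
    simp only [hχdef, hψdef]
    rcases lt_or_ge ℓ (L ω) with h|h
    · rw [if_pos h, if_neg (by linarith)]; ring
    · rw [if_neg (by linarith), if_pos h]; ring
  set S : Set Ω := {ω' | ℓ < L ω'} with hSdef
  have hSm : MeasurableSet S := measurableSet_lt measurable_const hLm
  have hScompl : {ω' | L ω' ≤ ℓ} = Sᶜ := by
    ext ω; simp [hSdef, not_lt]
  set p : ℝ := (P S).toReal with hpdef
  set q : ℝ := (P Sᶜ).toReal with hqdef
  have hp0 : 0 ≤ p := ENNReal.toReal_nonneg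
  have hq0 : 0 ≤ q := ENNReal.toReal_nonneg
  have hpq : p + q = 1 := by
    rw [hpdef, hqdef, ← ENNReal.toReal_add (measure_ne_top _ _) (measure_ne_top _ _),
      measure_add_measure_compl hSm]
    simp
  clear_value p q
  set D : ℝ := τ * p + (1 - τ) * q with hDdef
  clear_value D
  have hD : 0 < D := by nlinarith
  -- rewrite φ
  have hφ' : ∀ ω, φ ω = (τ * χ ω + (1 - τ) * ψ ω) / D := by
    intro ω
    rw [hφ ω, hScompl, ← hqdef, ← hDdef]
  -- integrals of indicators
  have hχint : ∫ ω, χ ω ∂P = p := by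
    have : χ = S.indicator (fun _ => (1:ℝ)) := by
      funext ω; simp [hχdef, Set.indicator_apply, hSdef, Set.mem_setOf_eq]
    rw [this, integral_indicator_const (1:ℝ) hSm]; simp [hpdef, Measure.real]
  have hψint : ∫ ω, ψ ω ∂P = q := by
    have : ψ = Sᶜ.indicator (fun _ => (1:ℝ)) := by
      funext ω; simp [hψdef, Set.indicator_apply, hSdef, Set.mem_setOf_eq, not_lt]
    rw [this, integral_indicator_const (1:ℝ) hSm.compl]; simp [hqdef, Measure.real]
  -- integrability facts
  have iL : Integrable L P := key L hLm (fun _ => le_rfl) C hC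
  have iχ : Integrable χ P := key χ hχm (fun _ => le_rfl) 1 hχb
  have iψ : Integrable ψ P := key ψ hψm (fun _ => le_rfl) 1 hψb
  have iχL : Integrable (fun ω => χ ω * L ω) P := by
    refine key _ (hχm.mul hLm) (fun _ => le_rfl) C fun ω => ?_
    rw [abs_mul]
    calc |χ ω| * |L ω| ≤ 1 * C := mul_le_mul (hχb ω) (hC ω) (abs_nonneg _) one_pos.le
    _ = C := one_mul C
  have iψL : Integrable (fun ω => ψ ω * L ω) P := by
    refine key _ (hψm.mul hLm) (fun _ => le_rfl) C fun ω => ?_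
    rw [abs_mul]
    calc |ψ ω| * |L ω| ≤ 1 * C := mul_le_mul (hψb ω) (hC ω) (abs_nonneg _) one_pos.le
    _ = C := one_mul C
  have iMp : Integrable (fun ω => max (L ω - ℓ) 0) P := by
    refine key _ ((hLm.sub measurable_const).max measurable_const) (fun _ => le_rfl)
      (C + |ℓ|) fun ω => ?_
    refine (hmaxabs _).trans ?_
    calc |L ω - ℓ| ≤ |L ω| + |ℓ| := abs_sub _ _
    _ ≤ C + |ℓ| := by linarith [hC ω]
  have iMn : Integrable (fun ω => max (ℓ - L ω) 0) P := by
    refine key _ ((measurable_const.sub hLm).max measurable_const) (fun _ => le_rfl)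
      (C + |ℓ|) fun ω => ?_
    refine (hmaxabs _).trans ?_
    calc |ℓ - L ω| ≤ |ℓ| + |L ω| := abs_sub _ _
    _ ≤ C + |ℓ| := by linarith [hC ω]
  -- abbreviations
  set M : ℝ := ∫ ω, max (ℓ - L ω) 0 ∂P with hMdef
  clear_value M
  set N : ℝ := ∫ ω, max (L ω - ℓ) 0 ∂P with hNdef
  clear_value N
  set EL : ℝ := ∫ ω, L ω ∂P with hELdef
  clear_value EL
  -- identity: N = EL - ℓ + M
  have hNid : N = EL - ℓ + M := by
    have hpt : ∀ ω, max (L ω - ℓ) 0 = (L ω - ℓ) + max (ℓ - L ω) 0 := fun ω => by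
      rcases max_cases (L ω - ℓ) 0 with ⟨h1,h2⟩|⟨h1,h2⟩ <;>
        rcases max_cases (ℓ - L ω) 0 with ⟨h3,h4⟩|⟨h3,h4⟩ <;> linarith
    rw [hNdef, integral_congr_ae (ae_of_all _ hpt),
      integral_add (show Integrable (fun ω => L ω - ℓ) P from iL.sub (integrable_const ℓ)) iMn,
      integral_sub iL (integrable_const ℓ)]
    simp [hELdef, hMdef]
  -- consequence of the expectile equation
  have hmain : τ * (EL - ℓ) + (2*τ - 1) * M = 0 := by
    have h := hℓ
    rw [hNid] at h
    linarith
  -- pointwise: χ (L - ℓ) = max (L-ℓ) 0, ψ (ℓ - L) = max (ℓ-L) 0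
  have hχpt : ∀ ω, χ ω * L ω = ℓ * χ ω + max (L ω - ℓ) 0 := fun ω => by
    simp only [hχdef]
    rcases lt_or_ge ℓ (L ω) with h|h
    · rw [if_pos h, max_eq_left (by linarith)]; ring
    · rw [if_neg (by linarith), max_eq_right (by linarith)]; ring
  have hψpt : ∀ ω, ψ ω * L ω = ℓ * ψ ω - max (ℓ - L ω) 0 := fun ω => by
    simp only [hψdef]
    rcases le_or_gt (L ω) ℓ with h|h
    · rw [if_pos h, max_eq_left (by linarith)]; ring
    · rw [if_neg (by linarith), max_eq_right (by linarith)]; ring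
  have hχLint : ∫ ω, χ ω * L ω ∂P = ℓ * p + N := by
    rw [integral_congr_ae (ae_of_all _ hχpt),
      integral_add (show Integrable (fun ω => ℓ * χ ω) P from iχ.const_mul ℓ) iMp,
      integral_const_mul, hχint, ← hNdef]
  have hψLint : ∫ ω, ψ ω * L ω ∂P = ℓ * q - M := by
    rw [integral_congr_ae (ae_of_all _ hψpt),
      integral_sub (show Integrable (fun ω => ℓ * ψ ω) P from iψ.const_mul ℓ) iMn,
      integral_const_mul, hψint, ← hMdef]
  -- part 1
  have part1 : ∀ ω, 0 ≤ φ ω := by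
    intro ω
    rw [hφ' ω]
    apply div_nonneg _ hD.le
    have h1 : 0 ≤ χ ω := by simp only [hχdef]; split_ifs <;> norm_num
    have h2 : 0 ≤ ψ ω := by simp only [hψdef]; split_ifs <;> norm_num
    nlinarith
  -- part 2
  have part2 : (∫ ω, φ ω ∂P) = 1 := by
    rw [integral_congr_ae (ae_of_all _ hφ'), integral_div,
      integral_add (iχ.const_mul τ) (iψ.const_mul (1-τ)),
      integral_const_mul, integral_const_mul, hχint, hψint, ← hDdef, div_self hD.ne']
  -- part 3
  have part3 : ℓ = ∫ ω, φ ω * L ω ∂P := by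
    have hpt : ∀ ω, φ ω * L ω = (τ * (χ ω * L ω) + (1 - τ) * (ψ ω * L ω)) / D := fun ω => by
      rw [hφ' ω]; ring
    rw [integral_congr_ae (ae_of_all _ hpt), integral_div,
      integral_add (iχL.const_mul τ) (iψL.const_mul (1-τ)),
      integral_const_mul, integral_const_mul, hχLint, hψLint]
    have hτN : τ * N = (1 - τ) * M := hℓ
    rw [eq_div_iff hD.ne']
    linear_combination ℓ * hDdef - hτN
  refine ⟨part1, part2, part3, ?_⟩
  -- part 4
  rintro Ls hLsm ⟨C', hC'⟩ ℓ' hℓ'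
  set Z : Ω → ℝ := fun ω => L ω + Ls ω with hZdef
  have hZm : Measurable Z := hLm.add hLsm
  have hZb : ∀ ω, |Z ω| ≤ C + C' := fun ω => by
    calc |Z ω| ≤ |L ω| + |Ls ω| := abs_add_le _ _
    _ ≤ C + C' := by linarith [hC ω, hC' ω]
  have iLs : Integrable Ls P := key Ls hLsm (fun _ => le_rfl) C' hC'
  have iZ : Integrable Z P := key Z hZm (fun _ => le_rfl) (C + C') hZb
  have iχLs : Integrable (fun ω => χ ω * Ls ω) P := by
    refine key _ (hχm.mul hLsm) (fun _ => le_rfl) C' fun ω => ?_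
    rw [abs_mul]
    calc |χ ω| * |Ls ω| ≤ 1 * C' := mul_le_mul (hχb ω) (hC' ω) (abs_nonneg _) one_pos.le
    _ = C' := one_mul C'
  have iψLs : Integrable (fun ω => ψ ω * Ls ω) P := by
    refine key _ (hψm.mul hLsm) (fun _ => le_rfl) C' fun ω => ?_
    rw [abs_mul]
    calc |ψ ω| * |Ls ω| ≤ 1 * C' := mul_le_mul (hψb ω) (hC' ω) (abs_nonneg _) one_pos.le
    _ = C' := one_mul C'
  have iMZ : ∀ x : ℝ, Integrable (fun ω => max (Z ω - x) 0) P := by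
    intro x
    refine key _ ((hZm.sub measurable_const).max measurable_const) (fun _ => le_rfl)
      (C + C' + |x|) fun ω => ?_
    refine (hmaxabs _).trans ?_
    calc |Z ω - x| ≤ |Z ω| + |x| := abs_sub _ _
    _ ≤ C + C' + |x| := by linarith [hZb ω]
  have iMZ' : ∀ x : ℝ, Integrable (fun ω => max (x - Z ω) 0) P := by
    intro x
    refine key _ ((measurable_const.sub hZm).max measurable_const) (fun _ => le_rfl)
      (C + C' + |x|) fun ω => ?_
    refine (hmaxabs _).trans ?_
    calc |x - Z ω| ≤ |x| + |Z ω| := abs_sub _ _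
    _ ≤ C + C' + |x| := by linarith [hZb ω]
  set ELs : ℝ := ∫ ω, Ls ω ∂P with hELsdef
  clear_value ELs
  set IA : ℝ := ∫ ω, χ ω * Ls ω ∂P with hIAdef
  clear_value IA
  set IC : ℝ := ∫ ω, ψ ω * Ls ω ∂P with hICdef
  clear_value IC
  have hIsum : IA + IC = ELs := by
    rw [hIAdef, hICdef, hELsdef, ← integral_add iχLs iψLs]
    refine integral_congr_ae (ae_of_all _ fun ω => ?_)
    linear_combination Ls ω * hχψ ω
  set c : ℝ := ∫ ω, φ ω * Ls ω ∂P with hcdef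
  clear_value c
  have hcval : D * c = τ * IA + (1 - τ) * IC := by
    have hpt : ∀ ω, φ ω * Ls ω = (τ * (χ ω * Ls ω) + (1 - τ) * (ψ ω * Ls ω)) / D := fun ω => by
      rw [hφ' ω]; ring
    rw [hcdef, integral_congr_ae (ae_of_all _ hpt), integral_div,
      integral_add (iχLs.const_mul τ) (iψLs.const_mul (1-τ)),
      integral_const_mul, integral_const_mul, ← hIAdef, ← hICdef,
      mul_comm, div_mul_cancel₀ _ hD.ne']
  set m : ℝ := ℓ + c with hmdef
  clear_value m
  -- G values
  have hGid : ∀ x : ℝ, ∫ ω, max (Z ω - x) 0 ∂P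
      = (EL + ELs - x) + ∫ ω, max (x - Z ω) 0 ∂P := by
    intro x
    have hpt : ∀ ω, max (Z ω - x) 0 = (Z ω - x) + max (x - Z ω) 0 := fun ω => by
      rcases max_cases (Z ω - x) 0 with ⟨h1,h2⟩|⟨h1,h2⟩ <;>
        rcases max_cases (x - Z ω) 0 with ⟨h3,h4⟩|⟨h3,h4⟩ <;> linarith
    rw [integral_congr_ae (ae_of_all _ hpt),
      integral_add (show Integrable (fun ω => Z ω - x) P from iZ.sub (integrable_const x)) (iMZ' x),
      integral_sub iZ (integrable_const x)]
    have hEZ : ∫ ω, Z ω ∂P = EL + ELs := by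
      rw [hZdef, integral_add iL iLs, ← hELdef, ← hELsdef]
    rw [hEZ]
    simp
  -- lower bound on ∫ max (m - Z) 0
  have hKlb : M + c * q - IC ≤ ∫ ω, max (m - Z ω) 0 ∂P := by
    have hpt : ∀ ω, max (ℓ - L ω) 0 + (c - Ls ω) * ψ ω ≤ max (m - Z ω) 0 := fun ω => by
      simp only [hψdef, hZdef, hmdef]
      rcases le_or_gt (L ω) ℓ with h|h
      · rw [if_pos h, max_eq_left (by linarith)]
        have : ℓ + c - (L ω + Ls ω) ≤ max (ℓ + c - (L ω + Ls ω)) 0 := le_max_left _ _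
        linarith
      · rw [if_neg (by linarith), max_eq_right (by linarith)]
        have : (0:ℝ) ≤ max (ℓ + c - (L ω + Ls ω)) 0 := le_max_right _ _
        linarith
    have hint : Integrable (fun ω => max (ℓ - L ω) 0 + (c - Ls ω) * ψ ω) P := by
      apply iMn.add
      have : (fun ω => (c - Ls ω) * ψ ω) = fun ω => c * ψ ω - ψ ω * Ls ω := by
        funext ω; ring
      rw [this]
      exact (show Integrable (fun ω => c * ψ ω - ψ ω * Ls ω) P from (iψ.const_mul c).sub iψLs)
    have := integral_mono hint (iMZ' m) hpt
    refine le_trans (le_of_eq ?_) this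
    have : (fun ω => max (ℓ - L ω) 0 + (c - Ls ω) * ψ ω)
        = fun ω => max (ℓ - L ω) 0 + (c * ψ ω - ψ ω * Ls ω) := by
      funext ω; ring
    rw [this, integral_add iMn
        (show Integrable (fun ω => c * ψ ω - ψ ω * Ls ω) P from (iψ.const_mul c).sub iψLs),
      integral_sub (show Integrable (fun ω => c * ψ ω) P from iψ.const_mul c) iψLs,
      integral_const_mul, hψint, ← hMdef, ← hICdef]
    ring
  -- G m ≥ 0
  have h2τ : (0:ℝ) ≤ 2*τ - 1 := by linarith
  have e2 := hGid m
  set K1 : ℝ := ∫ ω, max (Z ω - m) 0 ∂P with hK1def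
  set K2 : ℝ := ∫ ω, max (m - Z ω) 0 ∂P with hK2def
  clear_value K1 K2
  have hGm : 0 ≤ τ * K1 - (1 - τ) * K2 := by
    have heq : τ * (EL + ELs - m) + (2*τ - 1) * (M + c * q - IC) = 0 := by
      linear_combination hmain - τ * hIsum - hcval + c * hDdef + τ * c * hpq - τ * hmdef
    have e2τ : τ * K1 = τ * (EL + ELs - m) + τ * K2 := by rw [e2]; ring
    linarith [heq, mul_le_mul_of_nonneg_left hKlb h2τ, e2τ]
  -- strict monotonicity / conclusion
  by_contra hcon
  push_neg at hcon

  -- hcon : ℓ' < m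
  have hb1b2 : K2 ≤ (∫ ω, max (ℓ' - Z ω) 0 ∂P) + (m - ℓ') := by
    rw [hK2def]
    have hpt : ∀ ω, max (m - Z ω) 0 ≤ max (ℓ' - Z ω) 0 + (m - ℓ') := fun ω => by
      rcases max_cases (m - Z ω) 0 with ⟨h1,h2⟩|⟨h1,h2⟩ <;>
        rcases max_cases (ℓ' - Z ω) 0 with ⟨h3,h4⟩|⟨h3,h4⟩ <;> linarith
    have := integral_mono (iMZ' m) (show Integrable (fun ω => max (ℓ' - Z ω) 0 + (m - ℓ')) P from (iMZ' ℓ').add (integrable_const (m - ℓ'))) hpt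
    refine this.trans (le_of_eq ?_)
    rw [integral_add (iMZ' ℓ') (integrable_const (m - ℓ'))]
    simp
  have e1 := hGid ℓ'
  -- hℓ' gives G ℓ' = 0
  have hGℓ' : τ * ∫ ω, max (Z ω - ℓ') 0 ∂P = (1 - τ) * ∫ ω, max (ℓ' - Z ω) 0 ∂P := hℓ'
  -- derive contradiction
  set a1 : ℝ := ∫ ω, max (Z ω - ℓ') 0 ∂P with ha1def
  set b2 : ℝ := ∫ ω, max (ℓ' - Z ω) 0 ∂P with hb2def
  clear_value a1 b2
  have h5 : τ * K1 = (1 - τ) * b2 - τ * (m - ℓ') + τ * K2 - τ * b2 := by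
    linear_combination hGℓ' - τ * e1 + τ * e2
  have h6 : (2*τ - 1) * (K2 - b2) ≤ (2*τ - 1) * (m - ℓ') :=
    mul_le_mul_of_nonneg_left (by linarith [hb1b2]) h2τ
  have h7 : 0 < (1 - τ) * (m - ℓ') := mul_pos h1τ (by linarith)
  linarith [hGm, h5, h6, h7]
end
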